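/- arXiv:1511.08888 — 6 statements merged into one kernel-verified Lean document; each statement's English description precedes it below -/
import Mathlib

section
/- Let d ≥ 1 and k ∈ ℕ, and set r' = k + 1 + d/2. Let f, g : ℝ^d → ℝ be compactly supported functions of class C^{k+1}, and let χ : ℝ^d → ℝ be a compactly supported continuous function all of whose moments of order at most 2k vanish, i.e. ∫_{ℝ^d} w^j χ(w) dw = 0 for every multi-index j with |j| ≤ 2k. Then there exists a constant C, depending only on d, k, f, g and χ, such that for all natural numbers n ≤ m ≤ p and all x, y, z ∈ ℝ^d one has |∫_{ℝ^d} f^n_x(u) · g^m_y(u) · χ^p_z(u) du| ≤ C · 2^{n d/2} · 2^{−r'(p−m)}. -/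
set_option maxHeartbeats 1000000

open MeasureTheory

section auxiliary

variable {d : ℕ}

lemma line_hasDerivAt {N : ℕ} {H : (Fin d → ℝ) → ℝ} (hH : ContDiff ℝ (N : ℕ) H)
    {j : ℕ} (hj : j < N) (w : Fin d → ℝ) (t : ℝ) :
    HasDerivAt (fun s : ℝ => iteratedFDeriv ℝ j H (s • w) (fun _ => w))
      (iteratedFDeriv ℝ (j + 1) H (t • w) (fun _ => w)) t := by
  have hdiff : DifferentiableAt ℝ (iteratedFDeriv ℝ j H) (t • w) :=
    (hH.differentiable_iteratedFDeriv (by exact_mod_cast hj)).differentiableAt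
  have h2 : HasDerivAt (fun s : ℝ => s • w) w t := by
    simpa using (hasDerivAt_id t).smul_const w
  have h3 : HasDerivAt (fun s : ℝ => iteratedFDeriv ℝ j H (s • w))
      (fderiv ℝ (iteratedFDeriv ℝ j H) (t • w) w) t :=
    hdiff.hasFDerivAt.comp_hasDerivAt t h2
  have h4 := ((ContinuousMultilinearMap.apply ℝ (fun _ : Fin j => (Fin d → ℝ)) ℝ
      (fun _ => w)).hasFDerivAt).comp_hasDerivAt t h3
  have h5 : iteratedFDeriv ℝ (j + 1) H (t • w) (fun _ => w) =
      (ContinuousMultilinearMap.apply ℝ (fun _ : Fin j => (Fin d → ℝ)) ℝ (fun _ => w))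
        (fderiv ℝ (iteratedFDeriv ℝ j H) (t • w) w) := by
    rw [iteratedFDeriv_succ_apply_left]; rfl
  rw [h5]; exact h4

lemma iteratedDeriv_line {N : ℕ} {H : (Fin d → ℝ) → ℝ} (hH : ContDiff ℝ (N : ℕ) H)
    (w : Fin d → ℝ) : ∀ j, j ≤ N → ∀ t : ℝ,
    iteratedDeriv j (fun s : ℝ => H (s • w)) t = iteratedFDeriv ℝ j H (t • w) (fun _ => w) := by
  intro j
  induction j with
  | zero => intro _ t; simp [iteratedDeriv_zero, iteratedFDeriv_zero_apply]
  | succ j IH =>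
    intro hj t
    rw [iteratedDeriv_succ]
    have hfun : iteratedDeriv j (fun s : ℝ => H (s • w)) =
        fun s : ℝ => iteratedFDeriv ℝ j H (s • w) (fun _ => w) :=
      funext fun s => IH (Nat.le_of_succ_le hj) s
    rw [hfun]
    exact (line_hasDerivAt hH (Nat.lt_of_succ_le hj) w t).deriv

lemma iteratedDerivWithin_eq_iteratedDeriv' {f : ℝ → ℝ} {N : ℕ} (hf : ContDiff ℝ (N : ℕ) f)
    {s : Set ℝ} (hs : UniqueDiffOn ℝ s) {j : ℕ} (hj : j ≤ N) {x : ℝ} (hx : x ∈ s) :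
    iteratedDerivWithin j f s x = iteratedDeriv j f x := by
  have hf' : ContDiff ℝ ((N : ℕ∞) : WithTop ℕ∞) f := by exact_mod_cast hf
  have h := contDiff_iff_ftaylorSeries.mp hf'
  have h2 : HasFTaylorSeriesUpToOn (N : ℕ∞) f (ftaylorSeries ℝ f) s :=
    (hasFTaylorSeriesUpToOn_univ_iff.2 h).mono (Set.subset_univ s)
  have h3 := h2.eq_iteratedFDerivWithin_of_uniqueDiffOn (m := j) (by exact_mod_cast hj) hs hx
  rw [iteratedDerivWithin_eq_iteratedFDerivWithin, iteratedDeriv_eq_iteratedFDeriv, ← h3]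
  rfl

lemma taylor_bound' {k : ℕ} {H : (Fin d → ℝ) → ℝ} (hH : ContDiff ℝ (k + 1 : ℕ) H)
    {M : ℝ} (hM : ∀ y, ‖iteratedFDeriv ℝ (k + 1) H y‖ ≤ M) (w : Fin d → ℝ)
    (hline : ∀ j, j ≤ k + 1 → ∀ t : ℝ,
      iteratedDeriv j (fun s : ℝ => H (s • w)) t = iteratedFDeriv ℝ j H (t • w) (fun _ => w))
    (hwithin : ∀ (ψ : ℝ → ℝ), ContDiff ℝ (k + 1 : ℕ) ψ → ∀ j ≤ k + 1, ∀ x ∈ Set.Icc (0:ℝ) 1,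
      iteratedDerivWithin j ψ (Set.Icc (0:ℝ) 1) x = iteratedDeriv j ψ x) :
    |H w - ∑ j ∈ Finset.range (k + 1), ((j.factorial : ℝ))⁻¹ * iteratedFDeriv ℝ j H 0 (fun _ => w)| ≤
      M * ‖w‖ ^ (k + 1) := by
  have hM0 : 0 ≤ M := le_trans (norm_nonneg _) (hM 0)
  set ψ : ℝ → ℝ := fun s => H (s • w) with hψdef
  have hψ : ContDiff ℝ (k + 1 : ℕ) ψ := hH.comp (contDiff_id.smul contDiff_const)
  have hbound : ∀ y ∈ Set.Icc (0:ℝ) 1,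
      ‖iteratedDerivWithin (k + 1) ψ (Set.Icc (0:ℝ) 1) y‖ ≤ M * ‖w‖ ^ (k + 1) := by
    intro y hy
    rw [hwithin ψ hψ (k+1) le_rfl y hy, hline (k+1) le_rfl y]
    calc ‖iteratedFDeriv ℝ (k+1) H (y • w) (fun _ => w)‖
        ≤ ‖iteratedFDeriv ℝ (k+1) H (y • w)‖ * ∏ _i : Fin (k+1), ‖w‖ :=
          ContinuousMultilinearMap.le_opNorm _ _
      _ = ‖iteratedFDeriv ℝ (k+1) H (y • w)‖ * ‖w‖ ^ (k+1) := by
          rw [Finset.prod_const, Finset.card_univ, Fintype.card_fin]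
      _ ≤ M * ‖w‖ ^ (k+1) :=
          mul_le_mul_of_nonneg_right (hM _) (pow_nonneg (norm_nonneg w) _)
  have key := taylor_mean_remainder_bound (f := ψ) (a := 0) (b := 1) (n := k)
      zero_le_one (by exact_mod_cast hψ.contDiffOn) (Set.right_mem_Icc.2 zero_le_one) hbound
  have htayl : taylorWithinEval ψ k (Set.Icc (0:ℝ) 1) 0 1 =
      ∑ j ∈ Finset.range (k + 1), ((j.factorial : ℝ))⁻¹ * iteratedFDeriv ℝ j H 0 (fun _ => w) := by
    rw [taylor_within_apply]
    refine Finset.sum_congr rfl fun j hj => ?_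
    have hj' : j ≤ k + 1 := le_trans (Nat.le_of_lt_succ (Finset.mem_range.1 hj)) (Nat.le_succ k)
    rw [hwithin ψ hψ j hj' 0 (Set.left_mem_Icc.2 zero_le_one), hline j hj' 0]
    simp [smul_eq_mul]
  have hψ1 : ψ 1 = H w := by simp [hψdef]
  rw [hψ1, htayl] at key
  calc |H w - ∑ j ∈ Finset.range (k + 1), ((j.factorial : ℝ))⁻¹ * iteratedFDeriv ℝ j H 0 (fun _ => w)|
      ≤ M * ‖w‖ ^ (k+1) * (1 - 0) ^ (k + 1) / k.factorial := key
    _ ≤ M * ‖w‖ ^ (k+1) := by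
        rw [sub_zero, one_pow, mul_one]
        exact div_le_self (by positivity) (by exact_mod_cast Nat.one_le_iff_ne_zero.2 (Nat.factorial_ne_zero k))

lemma taylor_bound'' {d k : ℕ} {H : (Fin d → ℝ) → ℝ} (hH : ContDiff ℝ (k + 1 : ℕ) H)
    {M : ℝ} (hM : ∀ y, ‖iteratedFDeriv ℝ (k + 1) H y‖ ≤ M) (w : Fin d → ℝ) :
    |H w - ∑ j ∈ Finset.range (k + 1), ((j.factorial : ℝ))⁻¹ * iteratedFDeriv ℝ j H 0 (fun _ => w)| ≤
      M * ‖w‖ ^ (k + 1) :=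
  taylor_bound' hH hM w (fun j hj t => iteratedDeriv_line hH w j hj t)
    (fun ψ hψ j hj x hx =>
      iteratedDerivWithin_eq_iteratedDeriv' hψ (uniqueDiffOn_Icc zero_lt_one) hj hx)

lemma moment_zero {k : ℕ} {χ : (Fin d → ℝ) → ℝ} (hχ : Continuous χ)
    (hχsupp : HasCompactSupport χ)
    (hmom : ∀ j : Fin d → ℕ, (∑ i, j i) ≤ 2 * k →
      ∫ w : Fin d → ℝ, (∏ i, w i ^ j i) * χ w = 0)
    {j : ℕ} (hj : j ≤ 2 * k) (T : ContinuousMultilinearMap ℝ (fun _ : Fin j => (Fin d → ℝ)) ℝ) :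
    ∫ w : Fin d → ℝ, T (fun _ => w) * χ w = 0 := by
  classical
  set e : Fin d → (Fin d → ℝ) := fun i i' => if i = i' then 1 else 0 with he
  have hexp : ∀ w : Fin d → ℝ, T (fun _ => w) =
      ∑ r : Fin j → Fin d, (∏ l, w (r l)) * T (fun l => e (r l)) := by
    intro w
    have h1 : (fun _ : Fin j => w) = fun _ : Fin j => ∑ i, w i • e i := by
      funext l; exact pi_eq_sum_univ w
    rw [h1, T.map_sum]
    refine Finset.sum_congr rfl fun r _ => ?_
    rw [T.map_smul_univ]
    simp [smul_eq_mul]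
  have hcongr : ∀ w, T (fun _ => w) * χ w =
      ∑ r : Fin j → Fin d, T (fun l => e (r l)) * ((∏ l, w (r l)) * χ w) := by
    intro w
    rw [hexp w, Finset.sum_mul]
    exact Finset.sum_congr rfl fun r _ => by ring
  have hint : ∀ r : Fin j → Fin d, Integrable (fun w : Fin d → ℝ => (∏ l, w (r l)) * χ w) := by
    intro r
    refine Continuous.integrable_of_hasCompactSupport ?_ hχsupp.mul_left
    exact (continuous_finset_prod _ fun l _ => continuous_apply (r l)).mul hχ
  calc ∫ w : Fin d → ℝ, T (fun _ => w) * χ w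
      = ∫ w : Fin d → ℝ, ∑ r : Fin j → Fin d, T (fun l => e (r l)) * ((∏ l, w (r l)) * χ w) := by
        simp_rw [hcongr]
    _ = ∑ r : Fin j → Fin d, ∫ w : Fin d → ℝ, T (fun l => e (r l)) * ((∏ l, w (r l)) * χ w) :=
        integral_finset_sum _ (fun r _ => ((hint r).const_mul _))
    _ = 0 := by
        refine Finset.sum_eq_zero fun r _ => ?_
        rw [integral_const_mul]
        have hprod : ∀ w : Fin d → ℝ, (∏ l, w (r l)) =
            ∏ i, w i ^ (Finset.univ.filter fun l => r l = i).card := by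
          intro w
          rw [← Finset.prod_fiberwise_of_maps_to (fun l _ => Finset.mem_univ (r l))
            (fun l => w (r l))]
          refine Finset.prod_congr rfl fun i _ => ?_
          rw [Finset.prod_congr rfl (fun l hl => by
            rw [(Finset.mem_filter.1 hl).2] : ∀ l ∈ Finset.univ.filter fun l => r l = i,
              w (r l) = w i), Finset.prod_const]
        have hcard : (∑ i, (Finset.univ.filter fun l => r l = i).card) ≤ 2 * k := by
          have := Finset.card_eq_sum_card_fiberwise (f := r) (s := Finset.univ)
            (t := Finset.univ) (fun l _ => Finset.mem_univ (r l))
          rw [Finset.card_univ, Fintype.card_fin] at this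
          omega
        simp_rw [hprod]
        rw [hmom _ hcard, mul_zero]

lemma exists_deriv_bound {N : ℕ} {f : (Fin d → ℝ) → ℝ} (hf : ContDiff ℝ (N : ℕ) f)
    (hsupp : HasCompactSupport f) :
    ∃ Cf : ℝ, 0 ≤ Cf ∧ ∀ i, i ≤ N → ∀ y, ‖iteratedFDeriv ℝ i f y‖ ≤ Cf := by
  have h : ∀ i : ℕ, i ≤ N → ∃ Ci, ∀ y, ‖iteratedFDeriv ℝ i f y‖ ≤ Ci := fun i hi =>
    (hsupp.iteratedFDeriv i).exists_bound_of_continuous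
      (hf.continuous_iteratedFDeriv (by exact_mod_cast hi))
  choose! Ci hCi using h
  refine ⟨∑ i ∈ Finset.range (N + 1), max (Ci i) 0,
    Finset.sum_nonneg fun i _ => le_max_right _ _, fun i hi y => ?_⟩
  calc ‖iteratedFDeriv ℝ i f y‖ ≤ Ci i := hCi i hi y
    _ ≤ max (Ci i) 0 := le_max_left _ _
    _ ≤ ∑ i ∈ Finset.range (N + 1), max (Ci i) 0 :=
        Finset.single_le_sum (f := fun i => max (Ci i) 0) (fun i _ => le_max_right _ _)
          (Finset.mem_range.2 (Nat.lt_succ_of_le hi))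

lemma comp_affine_bound {N : ℕ} {f : (Fin d → ℝ) → ℝ} (hf : ContDiff ℝ (N : ℕ) f)
    {Cf : ℝ} (hCf : ∀ i, i ≤ N → ∀ y, ‖iteratedFDeriv ℝ i f y‖ ≤ Cf)
    {a : ℝ} (ha : 0 < a) (b : Fin d → ℝ) {i : ℕ} (hi : i ≤ N) (w : Fin d → ℝ) :
    ‖iteratedFDeriv ℝ i (fun w => f (a • w + b)) w‖ ≤ (i.factorial : ℝ) * Cf * a ^ i := by
  have hA : ∀ v : Fin d → ℝ, HasFDerivAt (fun w : Fin d → ℝ => a • w + b)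
      (a • ContinuousLinearMap.id ℝ (Fin d → ℝ)) v := fun v =>
    ((hasFDerivAt_id v).const_smul a).add_const b
  have hAc : ContDiff ℝ (N : ℕ) (fun w : Fin d → ℝ => a • w + b) := by
    fun_prop
  have hD : ∀ i', 1 ≤ i' → i' ≤ i →
      ‖iteratedFDeriv ℝ i' (fun w : Fin d → ℝ => a • w + b) w‖ ≤ a ^ i' := by
    intro i' h1 h2
    match i', h1 with
    | 1, _ =>
      have : ‖iteratedFDeriv ℝ (0 + 1) (fun w : Fin d → ℝ => a • w + b) w‖ =
          ‖iteratedFDeriv ℝ 0 (fderiv ℝ (fun w : Fin d → ℝ => a • w + b)) w‖ :=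
        (norm_iteratedFDeriv_fderiv).symm
      rw [show (1 : ℕ) = 0 + 1 from rfl, this, norm_iteratedFDeriv_zero, (hA w).fderiv]
      calc ‖a • ContinuousLinearMap.id ℝ (Fin d → ℝ)‖
          ≤ ‖a‖ * ‖ContinuousLinearMap.id ℝ (Fin d → ℝ)‖ := ContinuousLinearMap.opNorm_smul_le a _
        _ ≤ |a| * 1 := by
            rw [Real.norm_eq_abs]
            exact mul_le_mul_of_nonneg_left ContinuousLinearMap.norm_id_le (abs_nonneg a)
        _ = a ^ 1 := by rw [mul_one, abs_of_pos ha, pow_one]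
    | (i'' + 2), _ =>
      have h3 : ‖iteratedFDeriv ℝ (i'' + 1 + 1) (fun w : Fin d → ℝ => a • w + b) w‖ =
          ‖iteratedFDeriv ℝ (i'' + 1) (fderiv ℝ (fun w : Fin d → ℝ => a • w + b)) w‖ :=
        (norm_iteratedFDeriv_fderiv).symm
      have h4 : fderiv ℝ (fun w : Fin d → ℝ => a • w + b) =
          fun _ => a • ContinuousLinearMap.id ℝ (Fin d → ℝ) :=
        funext fun v => (hA v).fderiv
      rw [show i'' + 2 = i'' + 1 + 1 from rfl, h3, h4,
        iteratedFDeriv_const_of_ne (Nat.succ_ne_zero i'')]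
      simp only [Pi.zero_apply, norm_zero]
      positivity
  have hC : ∀ i', i' ≤ i → ‖iteratedFDeriv ℝ i' f ((fun w : Fin d → ℝ => a • w + b) w)‖ ≤ Cf :=
    fun i' h => hCf i' (le_trans h hi) _
  have := norm_iteratedFDeriv_comp_le (g := f) (f := fun w : Fin d → ℝ => a • w + b)
    (n := i) (N := (N : ℕ∞)) (by exact_mod_cast hf) (by exact_mod_cast hAc)
    (by exact_mod_cast hi) w hC hD
  exact this

lemma key_bound {d k : ℕ} (f g χ : (Fin d → ℝ) → ℝ)
    (hf : ContDiff ℝ (k + 1 : ℕ) f) (hfsupp : HasCompactSupport f)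
    (hg : ContDiff ℝ (k + 1 : ℕ) g) (hgsupp : HasCompactSupport g)
    (hχ : Continuous χ) (hχsupp : HasCompactSupport χ)
    (hmom : ∀ j : Fin d → ℕ, (∑ i, j i) ≤ 2 * k →
      ∫ w : Fin d → ℝ, (∏ i, w i ^ j i) * χ w = 0) :
    ∃ C : ℝ, 0 ≤ C ∧ ∀ a c : ℝ, 0 < a → a ≤ c → c ≤ 1 → ∀ b e : Fin d → ℝ,
      |∫ w : Fin d → ℝ, f (a • w + b) * g (c • w + e) * χ w| ≤ C * c ^ (k + 1) := by
  obtain ⟨Cf, hCf0, hCf⟩ := exists_deriv_bound hf hfsupp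
  obtain ⟨Cg, hCg0, hCg⟩ := exists_deriv_bound hg hgsupp
  obtain ⟨R₀, hR₀⟩ := hχsupp.isBounded.subset_closedBall (0 : Fin d → ℝ)
  set R : ℝ := max R₀ 0 with hRdef
  have hR : tsupport χ ⊆ Metric.closedBall (0 : Fin d → ℝ) R :=
    hR₀.trans (Metric.closedBall_subset_closedBall (le_max_left _ _))
  have hR0 : 0 ≤ R := le_max_right _ _
  set K : ℝ := ∑ i ∈ Finset.range (k + 2),
    ((k+1).choose i : ℝ) * (i.factorial : ℝ) * ((k+1-i).factorial : ℝ) with hKdef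
  have hK0 : 0 ≤ K := Finset.sum_nonneg fun i _ => by positivity
  refine ⟨K * Cf * Cg * R ^ (k+1) * ∫ w : Fin d → ℝ, |χ w|, by positivity, ?_⟩
  intro a c ha hac hc1 b e
  have hc0 : 0 < c := lt_of_lt_of_le ha hac
  set F : (Fin d → ℝ) → ℝ := fun w => f (a • w + b) with hFdef
  set G : (Fin d → ℝ) → ℝ := fun w => g (c • w + e) with hGdef
  set H : (Fin d → ℝ) → ℝ := fun w => F w * G w with hHdef
  have hAc : ∀ (t : ℝ) (v : Fin d → ℝ), ContDiff ℝ (k + 1 : ℕ)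
      (fun w : Fin d → ℝ => t • w + v) := fun t v => by
    fun_prop
  have hF : ContDiff ℝ (k + 1 : ℕ) F := hf.comp (hAc a b)
  have hG : ContDiff ℝ (k + 1 : ℕ) G := hg.comp (hAc c e)
  have hH : ContDiff ℝ (k + 1 : ℕ) H := hF.mul hG
  -- derivative bound
  have hDH : ∀ y, ‖iteratedFDeriv ℝ (k + 1) H y‖ ≤ K * Cf * Cg * c ^ (k + 1) := by
    intro y
    have h1 := norm_iteratedFDeriv_mul_le (𝕜 := ℝ) (N := ((k+1 : ℕ) : ℕ∞)) (n := k + 1)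
      (by exact_mod_cast hF) (by exact_mod_cast hG) y (by exact_mod_cast le_rfl)
    refine le_trans h1 ?_
    have h2 : ∀ i ∈ Finset.range (k + 2),
        ((k+1).choose i : ℝ) * ‖iteratedFDeriv ℝ i F y‖ * ‖iteratedFDeriv ℝ (k+1-i) G y‖ ≤
        (((k+1).choose i : ℝ) * (i.factorial : ℝ) * ((k+1-i).factorial : ℝ)) *
          (Cf * Cg * c ^ (k+1)) := by
      intro i hi
      have hik : i ≤ k + 1 := by
        have := Finset.mem_range.1 hi; omega
      have hbf : ‖iteratedFDeriv ℝ i F y‖ ≤ (i.factorial : ℝ) * Cf * a ^ i :=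
        comp_affine_bound hf hCf ha b hik y
      have hbg : ‖iteratedFDeriv ℝ (k+1-i) G y‖ ≤
          ((k+1-i).factorial : ℝ) * Cg * c ^ (k+1-i) :=
        comp_affine_bound hg hCg hc0 e (by omega) y
      have hpow : a ^ i * c ^ (k+1-i) ≤ c ^ (k+1) := by
        calc a ^ i * c ^ (k+1-i) ≤ c ^ i * c ^ (k+1-i) :=
              mul_le_mul_of_nonneg_right (pow_le_pow_left₀ ha.le hac i)
                (pow_nonneg hc0.le _)
          _ = c ^ (k+1) := by rw [← pow_add]; congr 1; omega
      calc ((k+1).choose i : ℝ) * ‖iteratedFDeriv ℝ i F y‖ * ‖iteratedFDeriv ℝ (k+1-i) G y‖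
          ≤ ((k+1).choose i : ℝ) * ((i.factorial : ℝ) * Cf * a ^ i) *
            (((k+1-i).factorial : ℝ) * Cg * c ^ (k+1-i)) := by
            have h0 : (0:ℝ) ≤ ((k+1).choose i : ℝ) := by positivity
            have hbf0 : (0:ℝ) ≤ ‖iteratedFDeriv ℝ (k+1-i) G y‖ := norm_nonneg _
            exact mul_le_mul (mul_le_mul_of_nonneg_left hbf h0) hbg hbf0 (by positivity)
        _ = (((k+1).choose i : ℝ) * (i.factorial : ℝ) * ((k+1-i).factorial : ℝ)) *
            (Cf * Cg * (a ^ i * c ^ (k+1-i))) := by ring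
        _ ≤ (((k+1).choose i : ℝ) * (i.factorial : ℝ) * ((k+1-i).factorial : ℝ)) *
            (Cf * Cg * c ^ (k+1)) := by
            refine mul_le_mul_of_nonneg_left ?_ (by positivity)
            exact mul_le_mul_of_nonneg_left hpow (by positivity)
    calc ∑ i ∈ Finset.range (k + 2), ((k+1).choose i : ℝ) *
          ‖iteratedFDeriv ℝ i F y‖ * ‖iteratedFDeriv ℝ (k+1-i) G y‖
        ≤ ∑ i ∈ Finset.range (k + 2),
          (((k+1).choose i : ℝ) * (i.factorial : ℝ) * ((k+1-i).factorial : ℝ)) *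
            (Cf * Cg * c ^ (k+1)) := Finset.sum_le_sum h2
      _ = K * Cf * Cg * c ^ (k+1) := by rw [← Finset.sum_mul, ← hKdef]; ring
  -- Taylor polynomial
  set P : (Fin d → ℝ) → ℝ := fun w => ∑ j ∈ Finset.range (k + 1),
    ((j.factorial : ℝ))⁻¹ * iteratedFDeriv ℝ j H 0 (fun _ => w) with hPdef
  have htay : ∀ w, |H w - P w| ≤ (K * Cf * Cg * c ^ (k+1)) * ‖w‖ ^ (k+1) :=
    fun w => taylor_bound'' hH hDH w
  have hPcont : Continuous P := by
    refine continuous_finset_sum _ fun j _ => ?_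
    exact continuous_const.mul ((iteratedFDeriv ℝ j H 0).coe_continuous.comp
      (continuous_pi fun _ => continuous_id))
  have hPint : ∫ w : Fin d → ℝ, P w * χ w = 0 := by
    have hco : ∀ w : Fin d → ℝ, P w * χ w = ∑ j ∈ Finset.range (k + 1),
        ((j.factorial : ℝ))⁻¹ * (iteratedFDeriv ℝ j H 0 (fun _ => w) * χ w) := by
      intro w
      rw [hPdef, Finset.sum_mul]
      exact Finset.sum_congr rfl fun j _ => by ring
    have hintg : ∀ j : ℕ, Integrable
        (fun w : Fin d → ℝ => iteratedFDeriv ℝ j H 0 (fun _ => w) * χ w) := by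
      intro j
      refine Continuous.integrable_of_hasCompactSupport ?_ hχsupp.mul_left
      exact ((iteratedFDeriv ℝ j H 0).coe_continuous.comp
        (continuous_pi fun _ => continuous_id)).mul hχ
    simp_rw [hco]
    rw [integral_finset_sum _ (fun j _ => (hintg j).const_mul _)]
    refine Finset.sum_eq_zero fun j hj => ?_
    rw [integral_const_mul, moment_zero hχ hχsupp hmom
      (by have := Finset.mem_range.1 hj; omega) _, mul_zero]
  -- put together
  have hHPint : Integrable (fun w : Fin d → ℝ => (H w - P w) * χ w) :=
    Continuous.integrable_of_hasCompactSupport ((hH.continuous.sub hPcont).mul hχ)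
      hχsupp.mul_left
  have hPχint : Integrable (fun w : Fin d → ℝ => P w * χ w) :=
    Continuous.integrable_of_hasCompactSupport (hPcont.mul hχ) hχsupp.mul_left
  have hsplit : ∫ w : Fin d → ℝ, H w * χ w =
      ∫ w : Fin d → ℝ, (H w - P w) * χ w := by
    have : ∀ w : Fin d → ℝ, H w * χ w = (H w - P w) * χ w + P w * χ w := fun w => by ring
    simp_rw [this]
    rw [integral_add hHPint hPχint, hPint, add_zero]
  have hmain : |∫ w : Fin d → ℝ, (H w - P w) * χ w| ≤
      (K * Cf * Cg * R ^ (k+1) * ∫ w : Fin d → ℝ, |χ w|) * c ^ (k+1) := by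
    have hgint : Integrable (fun w : Fin d → ℝ =>
        (K * Cf * Cg * c ^ (k+1) * R ^ (k+1)) * |χ w|) := by
      refine Integrable.const_mul ?_ _
      exact Continuous.integrable_of_hasCompactSupport hχ.abs
        (hχsupp.comp_left (g := abs) abs_zero)
    have hb : ∀ w : Fin d → ℝ, ‖(H w - P w) * χ w‖ ≤
        (K * Cf * Cg * c ^ (k+1) * R ^ (k+1)) * |χ w| := by
      intro w
      rw [Real.norm_eq_abs, abs_mul]
      by_cases hw : χ w = 0
      · simp [hw]
      · have hwsupp : w ∈ Metric.closedBall 0 R :=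
          hR (subset_closure (Function.mem_support.2 hw))
        have hwn : ‖w‖ ≤ R := by
          rwa [Metric.mem_closedBall, dist_zero_right] at hwsupp
        have h1 : |H w - P w| ≤ (K * Cf * Cg * c ^ (k+1)) * R ^ (k+1) := by
          refine le_trans (htay w) ?_
          refine mul_le_mul_of_nonneg_left ?_ (by positivity)
          exact pow_le_pow_left₀ (norm_nonneg w) hwn _
        calc |H w - P w| * |χ w| ≤ ((K * Cf * Cg * c ^ (k+1)) * R ^ (k+1)) * |χ w| :=
              mul_le_mul_of_nonneg_right h1 (abs_nonneg _)
          _ = (K * Cf * Cg * c ^ (k+1) * R ^ (k+1)) * |χ w| := by ring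
    have := norm_integral_le_of_norm_le hgint (Filter.Eventually.of_forall hb)
    rw [Real.norm_eq_abs] at this
    refine le_trans this ?_
    exact le_of_eq (by rw [integral_const_mul]; ring)
  calc |∫ w : Fin d → ℝ, f (a • w + b) * g (c • w + e) * χ w|
      = |∫ w : Fin d → ℝ, (H w - P w) * χ w| := by rw [← hsplit]
    _ ≤ (K * Cf * Cg * R ^ (k+1) * ∫ w : Fin d → ℝ, |χ w|) * c ^ (k+1) := hmain

end auxiliary

/-- wavelet-type decorrelation estimate.
`f^n_x(u) = 2^{nd/2} f(2^n (u - x))` etc. -/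
theorem stmt_0 (d k : ℕ) (hd : 1 ≤ d)
    (f g χ : (Fin d → ℝ) → ℝ)
    (hf : ContDiff ℝ (k + 1 : ℕ) f) (hfsupp : HasCompactSupport f)
    (hg : ContDiff ℝ (k + 1 : ℕ) g) (hgsupp : HasCompactSupport g)
    (hχ : Continuous χ) (hχsupp : HasCompactSupport χ)
    (hmom : ∀ j : Fin d → ℕ, (∑ i, j i) ≤ 2 * k →
      ∫ w : Fin d → ℝ, (∏ i, w i ^ j i) * χ w = 0) :
    ∃ C : ℝ, ∀ n m p : ℕ, n ≤ m → m ≤ p → ∀ x y z : Fin d → ℝ,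
      |∫ u : Fin d → ℝ,
          ((2 : ℝ) ^ ((n : ℝ) * d / 2) * f ((2 ^ n : ℝ) • (u - x))) *
          ((2 : ℝ) ^ ((m : ℝ) * d / 2) * g ((2 ^ m : ℝ) • (u - y))) *
          ((2 : ℝ) ^ ((p : ℝ) * d / 2) * χ ((2 ^ p : ℝ) • (u - z)))|
        ≤ C * (2 : ℝ) ^ ((n : ℝ) * d / 2) *
            (2 : ℝ) ^ (-(((k : ℝ) + 1 + (d : ℝ) / 2) * ((p : ℝ) - (m : ℝ)))) := by
  obtain ⟨C, hC0, hC⟩ := key_bound f g χ hf hfsupp hg hgsupp hχ hχsupp hmom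
  refine ⟨C, ?_⟩
  intro n m p hnm hmp x y z
  set An : ℝ := (2 : ℝ) ^ ((n : ℝ) * d / 2) with hAn
  set Am : ℝ := (2 : ℝ) ^ ((m : ℝ) * d / 2) with hAm
  set Ap : ℝ := (2 : ℝ) ^ ((p : ℝ) * d / 2) with hAp
  have hAnpos : 0 < An := Real.rpow_pos_of_pos two_pos _
  have hAmpos : 0 < Am := Real.rpow_pos_of_pos two_pos _
  have hAppos : 0 < Ap := Real.rpow_pos_of_pos two_pos _
  have h2p : (0:ℝ) < 2 ^ p := by positivity
  have h2pne : ((2:ℝ) ^ p) ≠ 0 := h2p.ne'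
  set a : ℝ := 2 ^ n * ((2:ℝ) ^ p)⁻¹ with hadef
  set c : ℝ := 2 ^ m * ((2:ℝ) ^ p)⁻¹ with hcdef
  have ha : 0 < a := by positivity
  have hac : a ≤ c := by
    apply mul_le_mul_of_nonneg_right _ (by positivity)
    exact pow_le_pow_right₀ one_le_two hnm
  have hc1 : c ≤ 1 := by
    rw [hcdef, ← div_eq_mul_inv, div_le_one h2p]
    exact pow_le_pow_right₀ one_le_two hmp
  set b : Fin d → ℝ := (2:ℝ) ^ n • (z - x) with hbdef
  set e : Fin d → ℝ := (2:ℝ) ^ m • (z - y) with hedef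
  -- step 1: pull out constants
  have step1 : ∫ u : Fin d → ℝ,
      (An * f ((2 ^ n : ℝ) • (u - x))) * (Am * g ((2 ^ m : ℝ) • (u - y))) *
        (Ap * χ ((2 ^ p : ℝ) • (u - z))) =
      (An * Am * Ap) * ∫ u : Fin d → ℝ,
        f ((2 ^ n : ℝ) • (u - x)) * g ((2 ^ m : ℝ) • (u - y)) * χ ((2 ^ p : ℝ) • (u - z)) := by
    rw [← integral_const_mul]
    congr 1
    funext u
    ring
  -- step 2: translation
  have step2 : ∫ u : Fin d → ℝ,
      f ((2 ^ n : ℝ) • (u - x)) * g ((2 ^ m : ℝ) • (u - y)) * χ ((2 ^ p : ℝ) • (u - z)) =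
      ∫ v : Fin d → ℝ,
      f ((2 ^ n : ℝ) • (v + z - x)) * g ((2 ^ m : ℝ) • (v + z - y)) * χ ((2 ^ p : ℝ) • (v + z - z)) :=
    (integral_add_right_eq_self (μ := volume) (fun u : Fin d → ℝ =>
      f ((2 ^ n : ℝ) • (u - x)) * g ((2 ^ m : ℝ) • (u - y)) * χ ((2 ^ p : ℝ) • (u - z))) z).symm
  -- step 3: scaling
  have step3 : ∫ v : Fin d → ℝ,
      f ((2 ^ n : ℝ) • (v + z - x)) * g ((2 ^ m : ℝ) • (v + z - y)) *
        χ ((2 ^ p : ℝ) • (v + z - z)) =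
      (((2:ℝ) ^ p) ^ d)⁻¹ * ∫ w : Fin d → ℝ, f (a • w + b) * g (c • w + e) * χ w := by
    have h3 := Measure.integral_comp_smul (volume) (fun v : Fin d → ℝ =>
      f ((2 ^ n : ℝ) • (v + z - x)) * g ((2 ^ m : ℝ) • (v + z - y)) *
        χ ((2 ^ p : ℝ) • (v + z - z))) (((2:ℝ) ^ p)⁻¹)
    have hrank : Module.finrank ℝ (Fin d → ℝ) = d := by
      rw [Module.finrank_fintype_fun_eq_card, Fintype.card_fin]
    rw [hrank] at h3
    have habs : |((((2:ℝ) ^ p)⁻¹) ^ d)⁻¹| = ((2:ℝ) ^ p) ^ d := by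
      rw [← inv_pow, inv_inv, abs_of_pos (by positivity)]
    rw [habs] at h3
    have heq : (fun w : Fin d → ℝ =>
        f ((2 ^ n : ℝ) • ((((2:ℝ) ^ p)⁻¹) • w + z - x)) *
        g ((2 ^ m : ℝ) • ((((2:ℝ) ^ p)⁻¹) • w + z - y)) *
        χ ((2 ^ p : ℝ) • ((((2:ℝ) ^ p)⁻¹) • w + z - z))) =
        fun w : Fin d → ℝ => f (a • w + b) * g (c • w + e) * χ w := by
      funext w
      have e1 : (2 ^ n : ℝ) • ((((2:ℝ) ^ p)⁻¹) • w + z - x) = a • w + b := by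
        rw [add_sub_assoc, smul_add, smul_smul, hbdef, hadef]
      have e2 : (2 ^ m : ℝ) • ((((2:ℝ) ^ p)⁻¹) • w + z - y) = c • w + e := by
        rw [add_sub_assoc, smul_add, smul_smul, hedef, hcdef]
      have e3 : (2 ^ p : ℝ) • ((((2:ℝ) ^ p)⁻¹) • w + z - z) = w := by
        rw [add_sub_cancel_right, smul_smul, mul_inv_cancel₀ h2pne, one_smul]
      rw [e1, e2, e3]
    rw [heq] at h3
    rw [h3, smul_eq_mul, inv_mul_cancel_left₀ (pow_ne_zero _ h2pne)]
  rw [step1, step2, step3]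
  have hbound := hC a c ha hac hc1 b e
  -- final numeric computation
  have hfactor : |An * Am * Ap * ((((2:ℝ) ^ p) ^ d)⁻¹ *
      ∫ w : Fin d → ℝ, f (a • w + b) * g (c • w + e) * χ w)| =
      (An * Am * Ap * (((2:ℝ) ^ p) ^ d)⁻¹) *
      |∫ w : Fin d → ℝ, f (a • w + b) * g (c • w + e) * χ w| := by
    rw [← mul_assoc, abs_mul]
    congr 1
    rw [abs_of_pos (by positivity)]
  rw [hfactor]
  have hkey : (An * Am * Ap * (((2:ℝ) ^ p) ^ d)⁻¹) * (C * c ^ (k + 1)) =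
      C * An * (2 : ℝ) ^ (-(((k : ℝ) + 1 + (d : ℝ) / 2) * ((p : ℝ) - (m : ℝ)))) := by
    have hc2 : c = (2:ℝ) ^ ((m : ℝ) - (p : ℝ)) := by
      rw [hcdef, Real.rpow_sub two_pos, Real.rpow_natCast, Real.rpow_natCast, div_eq_mul_inv]
    have hck : c ^ (k + 1) = (2:ℝ) ^ (((m : ℝ) - (p : ℝ)) * (k + 1 : ℕ)) := by
      rw [hc2, ← Real.rpow_natCast ((2:ℝ) ^ ((m : ℝ) - (p : ℝ))) (k+1), ← Real.rpow_mul two_pos.le]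
    have hpd : ((((2:ℝ) ^ p) ^ d)⁻¹) = (2:ℝ) ^ (-((p : ℝ) * (d : ℝ))) := by
      rw [← pow_mul, ← Real.rpow_natCast 2 (p * d), ← Real.rpow_neg two_pos.le]
      push_cast
      ring_nf
    rw [hck, hpd, hAn, hAm, hAp]
    rw [← Real.rpow_add two_pos, ← Real.rpow_add two_pos, ← Real.rpow_add two_pos]
    rw [mul_left_comm, ← Real.rpow_add two_pos, mul_assoc, ← Real.rpow_add two_pos]
    congr 1
    push_cast
    ring
  calc (An * Am * Ap * (((2:ℝ) ^ p) ^ d)⁻¹) *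
        |∫ w : Fin d → ℝ, f (a • w + b) * g (c • w + e) * χ w|
      ≤ (An * Am * Ap * (((2:ℝ) ^ p) ^ d)⁻¹) * (C * c ^ (k + 1)) :=
        mul_le_mul_of_nonneg_left hbound (by positivity)
    _ = C * An * (2 : ℝ) ^ (-(((k : ℝ) + 1 + (d : ℝ) / 2) * ((p : ℝ) - (m : ℝ)))) := hkey
end

section
/- Let g : ℝ → ℝ be twice continuously differentiable, C ∈ ℝ, T > 0, and let ξ : ℝ² → ℝ be continuous and periodic. Let M > 0 satisfy g(M) = g(−M) = 0. Let u be a classical solution on [0,T]×ℝ², periodic in its space variable, of the renormalized gPAM equation ∂_t u = Δu + g(u)·(ξ − C g'(u)), with initial condition u(0,·) = u₀ satisfying |u₀(x)| ≤ M for all x ∈ ℝ². Then |u(t,x)| ≤ M for all (t,x) ∈ [0,T]×ℝ². -/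
open Set Filter Topology

/-- A function of two space variables is periodic (with period `2π` in each
direction, i.e. invariant under translation by `2πk`, `k ∈ ℤ²`). -/
def SpacePeriodic (f : ℝ → ℝ → ℝ) : Prop :=
  ∀ (k₁ k₂ : ℤ) (x y : ℝ), f (x + 2 * Real.pi * k₁) (y + 2 * Real.pi * k₂) = f x y

lemma deriv_nonneg_of_max_left {f : ℝ → ℝ} {a c f' : ℝ} (h : c < a)
    (hd : HasDerivAt f f' a) (hmax : ∀ s ∈ Set.Icc c a, f s ≤ f a) : 0 ≤ f' := by
  have hne : (𝓝[Ioo c a] a).NeBot := right_nhdsWithin_Ioo_neBot h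
  have h1 : Filter.Tendsto (slope f a) (𝓝[Ioo c a] a) (𝓝 f') :=
    (hasDerivAt_iff_tendsto_slope.1 hd).mono_left
      (nhdsWithin_mono a (fun x hx => ne_of_lt hx.2))
  refine ge_of_tendsto h1 ?_
  filter_upwards [self_mem_nhdsWithin] with s hs
  have h2 : f s ≤ f a := hmax s ⟨hs.1.le, hs.2.le⟩
  have h3 : s - a < 0 := sub_neg.2 hs.2
  rw [slope_def_field, div_eq_mul_inv]
  exact mul_nonneg_of_nonpos_of_nonpos (by linarith) (inv_nonpos.2 h3.le)

lemma deriv2_nonpos_of_max {f : ℝ → ℝ} (hf : ContDiff ℝ 2 f) {a : ℝ}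
    (hmax : ∀ x, f x ≤ f a) : deriv (deriv f) a ≤ 0 := by
  by_contra hcon
  push_neg at hcon
  have hfd : ContDiff ℝ 1 (deriv f) := by
    have := (contDiff_succ_iff_deriv (n := 1)).1 (by exact_mod_cast hf)
    exact this.2.2
  have hcont2 : Continuous (deriv (deriv f)) := hfd.continuous_deriv le_rfl
  have hcont1 : Continuous (deriv f) := hfd.continuous
  have hev : ∀ᶠ x in 𝓝 a, 0 < deriv (deriv f) x :=
    hcont2.continuousAt.eventually_const_lt hcon
  obtain ⟨ε, hε, hball⟩ := Metric.eventually_nhds_iff_ball.1 hev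
  have hda : deriv f a = 0 := IsLocalMax.deriv_eq_zero (Filter.Eventually.of_forall hmax)
  have hmono : StrictMonoOn (deriv f) (Metric.ball a ε) := by
    apply strictMonoOn_of_deriv_pos (convex_ball a ε) hcont1.continuousOn
    intro x hx
    rw [Metric.isOpen_ball.interior_eq] at hx
    exact hball x hx
  have hsub : Icc a (a + ε/2) ⊆ Metric.ball a ε := by
    intro x hx
    simp only [Metric.mem_ball, Real.dist_eq, abs_lt]
    constructor
    · linarith [hx.1]
    · linarith [hx.2]
  have hmono2 : StrictMonoOn f (Icc a (a + ε/2)) := by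
    apply strictMonoOn_of_deriv_pos (convex_Icc _ _)
      ((hf.differentiable two_ne_zero).continuous.continuousOn)
    intro x hx
    rw [interior_Icc] at hx
    have hxball : x ∈ Metric.ball a ε := hsub ⟨hx.1.le, hx.2.le⟩
    have h5 : deriv f a < deriv f x := hmono (Metric.mem_ball_self hε) hxball hx.1
    rw [hda] at h5
    exact h5
  have h1 : f a < f (a + ε/2) :=
    hmono2 (left_mem_Icc.2 (by linarith)) (right_mem_Icc.2 (by linarith)) (by linarith)
  exact absurd (hmax (a + ε/2)) (not_le.2 h1)

lemma key (g : ℝ → ℝ) (hg : ContDiff ℝ 2 g)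
    (C T : ℝ) (hT : 0 < T)
    (ξ : ℝ → ℝ → ℝ) (hξc : Continuous fun p : ℝ × ℝ => ξ p.1 p.2)
    (M : ℝ) (hgM : g M = 0)
    (u : ℝ → ℝ → ℝ → ℝ)
    (hup : ∀ t, SpacePeriodic (u t))
    (huc : ContinuousOn (fun p : ℝ × ℝ × ℝ => u p.1 p.2.1 p.2.2) (Icc 0 T ×ˢ univ))
    (huspace : ∀ t ∈ Ioc 0 T, ContDiff ℝ 2 (fun p : ℝ × ℝ => u t p.1 p.2))
    (hutime : ∀ x y : ℝ, ∀ t ∈ Ioc 0 T, DifferentiableAt ℝ (fun s => u s x y) t)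
    (heq : ∀ t ∈ Ioc 0 T, ∀ x y : ℝ,
      deriv (fun s => u s x y) t =
        (deriv (fun a => deriv (fun b => u t b y) a) x
          + deriv (fun b => deriv (fun a => u t x a) b) y)
        + g (u t x y) * (ξ x y - C * deriv g (u t x y)))
    (hu0 : ∀ x y : ℝ, u 0 x y ≤ M) :
    ∀ t ∈ Icc 0 T, ∀ x y : ℝ, u t x y ≤ M := by
  have hπpos : (0:ℝ) < 2 * Real.pi := by positivity
  -- representatives in the periodicity box
  have hrep : ∀ x : ℝ, ∃ x' : ℝ, x' ∈ Icc 0 (2 * Real.pi) ∧ ∃ k : ℤ, x = x' + 2 * Real.pi * k := by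
    intro x
    refine ⟨2 * Real.pi * Int.fract (x / (2 * Real.pi)),
      ⟨mul_nonneg hπpos.le (Int.fract_nonneg _), ?_⟩, ⌊x / (2 * Real.pi)⌋, ?_⟩
    · nlinarith [Int.fract_lt_one (x / (2 * Real.pi)), Int.fract_nonneg (x / (2 * Real.pi))]
    · rw [Int.fract]
      have hne : (2 * Real.pi) ≠ 0 := ne_of_gt hπpos
      field_simp
      ring
  have huPer : ∀ t x y : ℝ, ∃ x' y' : ℝ, x' ∈ Icc 0 (2 * Real.pi) ∧ y' ∈ Icc 0 (2 * Real.pi)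
      ∧ u t x y = u t x' y' := by
    intro t x y
    obtain ⟨x', hx', k₁, hk₁⟩ := hrep x
    obtain ⟨y', hy', k₂, hk₂⟩ := hrep y
    exact ⟨x', y', hx', hy', by rw [hk₁, hk₂, hup t k₁ k₂ x' y']⟩
  -- compact box
  set Q : Set (ℝ × ℝ × ℝ) := Icc 0 T ×ˢ (Icc 0 (2*Real.pi) ×ˢ Icc 0 (2*Real.pi)) with hQdef
  have hQc : IsCompact Q := (isCompact_Icc).prod ((isCompact_Icc).prod isCompact_Icc)
  have hQsub : Q ⊆ Icc 0 T ×ˢ univ := fun p hp => ⟨hp.1, trivial⟩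
  have hQne : Q.Nonempty := ⟨(0, 0, 0), ⟨⟨le_rfl, hT.le⟩, ⟨le_rfl, hπpos.le⟩, ⟨le_rfl, hπpos.le⟩⟩⟩
  -- bound on u over the box
  obtain ⟨b, hb⟩ := hQc.exists_bound_of_continuousOn (huc.mono hQsub)
  set B : ℝ := max b |M| with hBdef
  have hMB : M ∈ Icc (-B) B := by
    constructor
    · have := neg_abs_le M; have := le_max_right b |M|; dsimp [B]; linarith
    · have := le_abs_self M; have := le_max_right b |M|; dsimp [B]; linarith
  have hBu : ∀ p ∈ Q, u p.1 p.2.1 p.2.2 ∈ Icc (-B) B := by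
    intro p hp
    have h1 : |u p.1 p.2.1 p.2.2| ≤ b := by simpa using hb p hp
    have h2 := le_max_left b |M|
    rw [abs_le] at h1
    constructor
    · dsimp [B]; linarith [h1.1]
    · dsimp [B]; linarith [h1.2]
  -- bounds on deriv g and Lipschitz bound on g
  have hgdiff : Differentiable ℝ g := hg.differentiable two_ne_zero
  have hgd : ContDiff ℝ 1 (deriv g) := by
    have := (contDiff_succ_iff_deriv (n := 1)).1 (by exact_mod_cast hg)
    exact this.2.2
  obtain ⟨L0, hL0⟩ := (isCompact_Icc : IsCompact (Icc (-B) B)).exists_bound_of_continuousOn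
    hgd.continuous.continuousOn
  set L : ℝ := max L0 0 with hLdef
  have hLnn : (0:ℝ) ≤ L := le_max_right _ _
  have hLb : ∀ s ∈ Icc (-B) B, |deriv g s| ≤ L := by
    intro s hs
    have := hL0 s hs
    rw [Real.norm_eq_abs] at this
    exact this.trans (le_max_left _ _)
  have hgLip : ∀ s ∈ Icc (-B) B, |g s| ≤ L * |s - M| := by
    intro s hs
    have h1 := Convex.norm_image_sub_le_of_norm_deriv_le (f := g)
      (fun x _ => hgdiff x)
      (fun x hx => by rw [Real.norm_eq_abs]; exact hLb x hx)
      (convex_Icc (-B) B) hMB hs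
    simpa [hgM, Real.norm_eq_abs] using h1
  -- bound on ξ
  obtain ⟨S0, hS0⟩ := ((isCompact_Icc.prod isCompact_Icc) :
      IsCompact (Icc (0:ℝ) (2*Real.pi) ×ˢ Icc (0:ℝ) (2*Real.pi))).exists_bound_of_continuousOn
    hξc.continuousOn
  set S : ℝ := max S0 0 with hSdef
  have hSnn : (0:ℝ) ≤ S := le_max_right _ _
  have hSb : ∀ x y : ℝ, x ∈ Icc 0 (2*Real.pi) → y ∈ Icc 0 (2*Real.pi) → |ξ x y| ≤ S := by
    intro x y hx hy
    have := hS0 (x, y) ⟨hx, hy⟩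
    rw [Real.norm_eq_abs] at this
    exact this.trans (le_max_left _ _)
  set K : ℝ := S + |C| * L with hKdef
  have hKnn : (0:ℝ) ≤ K := by positivity
  set lam : ℝ := L * K + 1 with hlam
  -- maximum of w over the box
  have hwc : ContinuousOn
      (fun p : ℝ×ℝ×ℝ => (u p.1 p.2.1 p.2.2 - M) * Real.exp (-(lam * p.1))) Q := by
    apply ContinuousOn.mul ((huc.mono hQsub).sub continuousOn_const)
    exact (Real.continuous_exp.comp (continuous_const.mul continuous_fst).neg).continuousOn
  obtain ⟨⟨t0, x0, y0⟩, hpQ, hpmax⟩ := hQc.exists_isMaxOn hQne hwc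
  have ht0T : t0 ∈ Icc 0 T := hpQ.1
  have hx0 : x0 ∈ Icc 0 (2*Real.pi) := hpQ.2.1
  have hy0 : y0 ∈ Icc 0 (2*Real.pi) := hpQ.2.2
  suffices hstar : u t0 x0 y0 ≤ M by
    intro t ht x y
    obtain ⟨x', y', hx', hy', hxy⟩ := huPer t x y
    have h1 := hpmax (show ((t, x', y') : ℝ×ℝ×ℝ) ∈ Q from ⟨ht, hx', hy'⟩)
    simp only [Set.mem_setOf_eq] at h1
    have h2 : (u t0 x0 y0 - M) * Real.exp (-(lam * t0)) ≤ 0 :=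
      mul_nonpos_of_nonpos_of_nonneg (by linarith) (Real.exp_pos _).le
    rw [hxy]
    nlinarith [Real.exp_pos (-(lam * t))]
  by_contra hstar
  push_neg at hstar
  -- the max time is positive
  have ht0pos : 0 < t0 := by
    rcases lt_or_eq_of_le ht0T.1 with h | h
    · exact h
    · exfalso; rw [← h] at hstar; linarith [hu0 x0 y0]
  have ht0 : t0 ∈ Ioc 0 T := ⟨ht0pos, ht0T.2⟩
  -- spatial global maximality
  have hsp : ∀ x y : ℝ, u t0 x y ≤ u t0 x0 y0 := by
    intro x y
    obtain ⟨x', y', hx', hy', hxy⟩ := huPer t0 x y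
    have h1 := hpmax (show ((t0, x', y') : ℝ×ℝ×ℝ) ∈ Q from ⟨ht0T, hx', hy'⟩)
    simp only [Set.mem_setOf_eq] at h1
    rw [hxy]
    nlinarith [Real.exp_pos (-(lam * t0))]
  -- second derivative tests
  have hcx : ContDiff ℝ 2 (fun x => u t0 x y0) :=
    (huspace t0 ht0).comp (contDiff_id.prodMk contDiff_const)
  have hcy : ContDiff ℝ 2 (fun y => u t0 x0 y) :=
    (huspace t0 ht0).comp (contDiff_const.prodMk contDiff_id)
  have hxx : deriv (fun a => deriv (fun b => u t0 b y0) a) x0 ≤ 0 :=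
    deriv2_nonpos_of_max hcx (fun x => hsp x y0)
  have hyy : deriv (fun b => deriv (fun a => u t0 x0 a) b) y0 ≤ 0 :=
    deriv2_nonpos_of_max hcy (fun y => hsp x0 y)
  -- time derivative at the max point
  have hdu : HasDerivAt (fun s => u s x0 y0) (deriv (fun s => u s x0 y0) t0) t0 :=
    (hutime x0 y0 t0 ht0).hasDerivAt
  set du := deriv (fun s => u s x0 y0) t0 with hdudef
  have hφ : HasDerivAt (fun s => (u s x0 y0 - M) * Real.exp (-(lam * s)))
      (du * Real.exp (-(lam * t0)) + (u t0 x0 y0 - M) * (Real.exp (-(lam * t0)) * -lam)) t0 := by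
    have h2 : HasDerivAt (fun s : ℝ => -(lam * s)) (-lam) t0 := by
      simpa using ((hasDerivAt_id t0).const_mul lam).fun_neg
    exact (hdu.sub_const M).mul h2.exp
  have hφmax : ∀ s ∈ Icc 0 t0,
      (u s x0 y0 - M) * Real.exp (-(lam * s)) ≤ (u t0 x0 y0 - M) * Real.exp (-(lam * t0)) := by
    intro s hs
    have h1 := hpmax (show ((s, x0, y0) : ℝ×ℝ×ℝ) ∈ Q from
      ⟨⟨hs.1, hs.2.trans ht0T.2⟩, hx0, hy0⟩)
    simpa using h1
  have h0 := deriv_nonneg_of_max_left ht0pos hφ hφmax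
  -- bound the reaction term at the max point
  have huB : u t0 x0 y0 ∈ Icc (-B) B := hBu (t0, x0, y0) hpQ
  have h4 : |g (u t0 x0 y0)| ≤ L * (u t0 x0 y0 - M) := by
    have h1 := hgLip _ huB
    rwa [abs_of_pos (by linarith : (0:ℝ) < u t0 x0 y0 - M)] at h1
  have h5 : |ξ x0 y0 - C * deriv g (u t0 x0 y0)| ≤ K := by
    have h5a := hSb x0 y0 hx0 hy0
    have h5b := hLb _ huB
    calc |ξ x0 y0 - C * deriv g (u t0 x0 y0)|
        ≤ |ξ x0 y0| + |C * deriv g (u t0 x0 y0)| := abs_sub _ _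
      _ = |ξ x0 y0| + |C| * |deriv g (u t0 x0 y0)| := by rw [abs_mul]
      _ ≤ S + |C| * L := by
          have := mul_le_mul_of_nonneg_left h5b (abs_nonneg C)
          linarith
      _ = K := hKdef.symm
  have h6 : g (u t0 x0 y0) * (ξ x0 y0 - C * deriv g (u t0 x0 y0))
      ≤ L * (u t0 x0 y0 - M) * K := by
    calc g (u t0 x0 y0) * (ξ x0 y0 - C * deriv g (u t0 x0 y0))
        ≤ |g (u t0 x0 y0) * (ξ x0 y0 - C * deriv g (u t0 x0 y0))| := le_abs_self _
      _ = |g (u t0 x0 y0)| * |ξ x0 y0 - C * deriv g (u t0 x0 y0)| := abs_mul _ _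
      _ ≤ (L * (u t0 x0 y0 - M)) * K :=
          mul_le_mul h4 h5 (abs_nonneg _) (by nlinarith)
  have h7 : du ≤ L * (u t0 x0 y0 - M) * K := by
    have heqn := heq t0 ht0 x0 y0
    rw [← hdudef] at heqn
    linarith [heqn, hxx, hyy, h6]
  -- contradiction
  have hE : (0:ℝ) < Real.exp (-(lam * t0)) := Real.exp_pos _
  have h8 : 0 ≤ (du - lam * (u t0 x0 y0 - M)) * Real.exp (-(lam * t0)) := by nlinarith
  have h9 : 0 ≤ du - lam * (u t0 x0 y0 - M) := nonneg_of_mul_nonneg_left h8 hE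
  rw [hlam] at h9
  nlinarith


/-- weak maximum principle / global bound for the renormalized
gPAM equation `∂ₜ u = Δu + g(u)(ξ - C g'(u))` when `g(±M) = 0` and `|u₀| ≤ M`. -/
theorem stmt_2
    (g : ℝ → ℝ) (hg : ContDiff ℝ 2 g)
    (C T : ℝ) (hT : 0 < T)
    (ξ : ℝ → ℝ → ℝ) (hξc : Continuous fun p : ℝ × ℝ => ξ p.1 p.2)
    (hξp : SpacePeriodic ξ)
    (M : ℝ) (hM : 0 < M) (hgM : g M = 0) (hgM' : g (-M) = 0)
    (u : ℝ → ℝ → ℝ → ℝ)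
    -- `u` is periodic in its space variable
    (hup : ∀ t, SpacePeriodic (u t))
    -- `u` is continuous on `[0,T] × ℝ²`
    (huc : ContinuousOn (fun p : ℝ × ℝ × ℝ => u p.1 p.2.1 p.2.2) (Icc 0 T ×ˢ univ))
    -- `u` is twice continuously differentiable in space on `(0,T] × ℝ²`
    (huspace : ∀ t ∈ Ioc 0 T, ContDiff ℝ 2 (fun p : ℝ × ℝ => u t p.1 p.2))
    -- `u` is once continuously differentiable in time on `(0,T] × ℝ²`
    (hutime : ∀ x y : ℝ, ∀ t ∈ Ioc 0 T, DifferentiableAt ℝ (fun s => u s x y) t)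
    (hutimec : ∀ x y : ℝ, ContinuousOn (fun s => deriv (fun s' => u s' x y) s) (Ioc 0 T))
    -- the equation holds on `(0,T] × ℝ²`
    (heq : ∀ t ∈ Ioc 0 T, ∀ x y : ℝ,
      deriv (fun s => u s x y) t =
        (deriv (fun a => deriv (fun b => u t b y) a) x
          + deriv (fun b => deriv (fun a => u t x a) b) y)
        + g (u t x y) * (ξ x y - C * deriv g (u t x y)))
    -- initial condition
    (hu0 : ∀ x y : ℝ, |u 0 x y| ≤ M) :
    ∀ t ∈ Icc 0 T, ∀ x y : ℝ, |u t x y| ≤ M := by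
  have h1 : ∀ t ∈ Icc 0 T, ∀ x y : ℝ, u t x y ≤ M :=
    key g hg C T hT ξ hξc M hgM u hup huc huspace hutime heq
      (fun x y => (abs_le.1 (hu0 x y)).2)
  have h2 : ∀ t ∈ Icc 0 T, ∀ x y : ℝ, -u t x y ≤ M := by
    refine key (fun s => -g (-s)) ((hg.comp contDiff_neg).neg) C T hT ξ hξc M
      (by simpa using hgM') (fun t x y => -u t x y) ?_ huc.neg
      (fun t ht => (huspace t ht).neg) (fun x y t ht => (hutime x y t ht).neg) ?_
      (fun x y => by show -u 0 x y ≤ M; linarith [(abs_le.1 (hu0 x y)).1])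
    · intro t k₁ k₂ x y
      show -u t (x + 2 * Real.pi * k₁) (y + 2 * Real.pi * k₂) = -u t x y
      rw [hup t k₁ k₂ x y]
    · intro t ht x y
      have hu := heq t ht x y
      have e0 : deriv (fun s => -u s x y) t = -deriv (fun s => u s x y) t := deriv.neg
      have e1 : deriv (fun a => deriv (fun b => -u t b y) a) x
          = -deriv (fun a => deriv (fun b => u t b y) a) x := by
        have h : (fun a => deriv (fun b => -u t b y) a)
            = fun a => -deriv (fun b => u t b y) a := funext fun a => deriv.neg
        rw [h]
        exact deriv.neg
      have e2 : deriv (fun b => deriv (fun a => -u t x a) b) y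
          = -deriv (fun b => deriv (fun a => u t x a) b) y := by
        have h : (fun b => deriv (fun a => -u t x a) b)
            = fun b => -deriv (fun a => u t x a) b := funext fun b => deriv.neg
        rw [h]
        exact deriv.neg
      have e3 : deriv (fun s => -g (-s)) (-u t x y) = deriv g (u t x y) := by
        rw [deriv.fun_neg (f := fun s => g (-s)), deriv_comp_neg, neg_neg, neg_neg]
      show deriv (fun s => -u s x y) t
          = (deriv (fun a => deriv (fun b => -u t b y) a) x
            + deriv (fun b => deriv (fun a => -u t x a) b) y)
          + (-g (-(-u t x y))) * (ξ x y - C * deriv (fun s => -g (-s)) (-u t x y))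
      rw [e0, e1, e2, e3, neg_neg]
      linarith [hu]
  intro t ht x y
  rw [abs_le]
  exact ⟨by linarith [h2 t ht x y], h1 t ht x y⟩
end

section
/- For C ∈ ℝ let M(C) : T_g → T_g be the linear map with M(C)(𝓘(Ξ)Ξ) = 𝓘(Ξ)Ξ − C·𝟏 and M(C)τ = τ for every other basis vector τ. Then C ↦ M(C) is a group homomorphism from (ℝ, +) into the group of linear automorphisms of T_g, i.e. M(0) = Id and M(C) ∘ M(C') = M(C + C'), and M(C) commutes with the structure group: M(C) ∘ Γ_a = Γ_a ∘ M(C) for all C ∈ ℝ and a ∈ ℝ³. -/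
/-- The basis symbols of the model space `T_g` for gPAM. -/
inductive B8 : Type
  | Xi | IXiXi | X1Xi | X2Xi | One | IXi | X1 | X2
  deriving DecidableEq

/-- The structure group map `Γ_a : T_g → T_g`, `a = (a₀, a₁, a₂) ∈ ℝ³`,
in coordinates. -/
def Gamma (a : ℝ × ℝ × ℝ) (v : B8 → ℝ) : B8 → ℝ
  | .Xi => v .Xi + a.1 * v .IXiXi + a.2.1 * v .X1Xi + a.2.2 * v .X2Xi
  | .One => v .One + a.1 * v .IXi + a.2.1 * v .X1 + a.2.2 * v .X2
  | b => v b

/-- The renormalization map `M(C) : T_g → T_g`, the linear map with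
`M(C)(𝓘(Ξ)Ξ) = 𝓘(Ξ)Ξ - C 𝟏` and fixing every other basis vector,
in coordinates. -/
def M8 (C : ℝ) (v : B8 → ℝ) : B8 → ℝ
  | .One => v .One - C * v .IXiXi
  | b => v b

/-- `C ↦ M(C)` is a group homomorphism from `(ℝ,+)` into the
linear automorphisms of `T_g`, and it commutes with the structure group. -/
theorem stmt_7 :
    (∀ C : ℝ, IsLinearMap ℝ (M8 C)) ∧
    M8 0 = id ∧
    (∀ C C' : ℝ, M8 C ∘ M8 C' = M8 (C + C')) ∧
    (∀ (C : ℝ) (a : ℝ × ℝ × ℝ), M8 C ∘ Gamma a = Gamma a ∘ M8 C) := by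
  refine ⟨fun C => ⟨fun x y => ?_, fun c x => ?_⟩, ?_, fun C C' => ?_, fun C a => ?_⟩ <;>
    funext v <;> try funext b
  all_goals (first | cases b | cases v) <;> simp [M8, Gamma] <;> ring
end

section
/- With the coproducts Δ : T_g → T_g ⊗ A₀ and Δ^H : T_g^H → T_g^H ⊗ A, the abstract translation map τ_H and the algebra homomorphism τ_H⁺ : A₀ → A defined below, one has the intertwining identity (τ_H ⊗ τ_H⁺) ∘ Δ = Δ^H ∘ τ_H as linear maps from T_g to T_g^H ⊗ A. -/
open TensorProduct

instance : Fintype B8 :=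
  ⟨{.Xi, .IXiXi, .X1Xi, .X2Xi, .One, .IXi, .X1, .X2}, fun x => by cases x <;> simp⟩

/-- The basis symbols of the extended model space `T_g^H`. -/
inductive B15 : Type
  | Xi | H | IXiXi | IXiH | IHXi | IHH | X1Xi | X1H | X2Xi | X2H
  | One | IXi | IH | X1 | X2
  deriving DecidableEq

instance : Fintype B15 :=
  ⟨{.Xi, .H, .IXiXi, .IXiH, .IHXi, .IHH, .X1Xi, .X1H, .X2Xi, .X2H, .One, .IXi, .IH, .X1, .X2},
    fun x => by cases x <;> simp⟩

/-- `A₀ = ℝ[J_Ξ, X₁, X₂]`, with `J_Ξ = X 0`, `X₁ = X 1`, `X₂ = X 2`. -/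
abbrev A0 : Type := MvPolynomial (Fin 3) ℝ

/-- `A = ℝ[J_Ξ, J_H, X₁, X₂]`, with `J_Ξ = X 0`, `J_H = X 1`, `X₁ = X 2`,
`X₂ = X 3`. -/
abbrev A4 : Type := MvPolynomial (Fin 4) ℝ

/-- The basis vector of `T_g = B8 → ℝ` corresponding to a symbol. -/
noncomputable def e8 (b : B8) : B8 → ℝ := Pi.single b 1

/-- The basis vector of `T_g^H = B15 → ℝ` corresponding to a symbol. -/
noncomputable def e15 (b : B15) : B15 → ℝ := Pi.single b 1

/-- The abstract translation map `τ_H : T_g → T_g^H`. -/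
noncomputable def tauH : (B8 → ℝ) →ₗ[ℝ] (B15 → ℝ) :=
  (Pi.basisFun ℝ B8).constr ℝ fun b =>
    match b with
    | .Xi => e15 .Xi + e15 .H
    | .IXiXi => e15 .IXiXi + e15 .IXiH + e15 .IHXi + e15 .IHH
    | .X1Xi => e15 .X1Xi + e15 .X1H
    | .X2Xi => e15 .X2Xi + e15 .X2H
    | .One => e15 .One
    | .IXi => e15 .IXi + e15 .IH
    | .X1 => e15 .X1
    | .X2 => e15 .X2

/-- The algebra homomorphism `τ_H⁺ : A₀ → A`, `J_Ξ ↦ J_Ξ + J_H`, `X_i ↦ X_i`. -/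
noncomputable def tauHplus : A0 →ₐ[ℝ] A4 :=
  MvPolynomial.aeval
    ![MvPolynomial.X 0 + MvPolynomial.X 1, MvPolynomial.X 2, MvPolynomial.X 3]

/-- The coproduct `Δ : T_g → T_g ⊗ A₀`. -/
noncomputable def Delta : (B8 → ℝ) →ₗ[ℝ] TensorProduct ℝ (B8 → ℝ) A0 :=
  (Pi.basisFun ℝ B8).constr ℝ fun b =>
    match b with
    | .Xi => e8 .Xi ⊗ₜ[ℝ] (1 : A0)
    | .One => e8 .One ⊗ₜ[ℝ] (1 : A0)
    | .X1 => e8 .X1 ⊗ₜ[ℝ] (1 : A0) + e8 .One ⊗ₜ[ℝ] MvPolynomial.X 1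
    | .X2 => e8 .X2 ⊗ₜ[ℝ] (1 : A0) + e8 .One ⊗ₜ[ℝ] MvPolynomial.X 2
    | .IXi => e8 .IXi ⊗ₜ[ℝ] (1 : A0) + e8 .One ⊗ₜ[ℝ] MvPolynomial.X 0
    | .IXiXi => e8 .IXiXi ⊗ₜ[ℝ] (1 : A0) + e8 .Xi ⊗ₜ[ℝ] MvPolynomial.X 0
    | .X1Xi => e8 .X1Xi ⊗ₜ[ℝ] (1 : A0) + e8 .Xi ⊗ₜ[ℝ] MvPolynomial.X 1
    | .X2Xi => e8 .X2Xi ⊗ₜ[ℝ] (1 : A0) + e8 .Xi ⊗ₜ[ℝ] MvPolynomial.X 2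

/-- The coproduct `Δ^H : T_g^H → T_g^H ⊗ A`. -/
noncomputable def DeltaH : (B15 → ℝ) →ₗ[ℝ] TensorProduct ℝ (B15 → ℝ) A4 :=
  (Pi.basisFun ℝ B15).constr ℝ fun b =>
    match b with
    | .Xi => e15 .Xi ⊗ₜ[ℝ] (1 : A4)
    | .H => e15 .H ⊗ₜ[ℝ] (1 : A4)
    | .One => e15 .One ⊗ₜ[ℝ] (1 : A4)
    | .X1 => e15 .X1 ⊗ₜ[ℝ] (1 : A4) + e15 .One ⊗ₜ[ℝ] MvPolynomial.X 2
    | .X2 => e15 .X2 ⊗ₜ[ℝ] (1 : A4) + e15 .One ⊗ₜ[ℝ] MvPolynomial.X 3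
    | .IXi => e15 .IXi ⊗ₜ[ℝ] (1 : A4) + e15 .One ⊗ₜ[ℝ] MvPolynomial.X 0
    | .IH => e15 .IH ⊗ₜ[ℝ] (1 : A4) + e15 .One ⊗ₜ[ℝ] MvPolynomial.X 1
    | .IXiXi => e15 .IXiXi ⊗ₜ[ℝ] (1 : A4) + e15 .Xi ⊗ₜ[ℝ] MvPolynomial.X 0
    | .IXiH => e15 .IXiH ⊗ₜ[ℝ] (1 : A4) + e15 .H ⊗ₜ[ℝ] MvPolynomial.X 0
    | .IHXi => e15 .IHXi ⊗ₜ[ℝ] (1 : A4) + e15 .Xi ⊗ₜ[ℝ] MvPolynomial.X 1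
    | .IHH => e15 .IHH ⊗ₜ[ℝ] (1 : A4) + e15 .H ⊗ₜ[ℝ] MvPolynomial.X 1
    | .X1Xi => e15 .X1Xi ⊗ₜ[ℝ] (1 : A4) + e15 .Xi ⊗ₜ[ℝ] MvPolynomial.X 2
    | .X1H => e15 .X1H ⊗ₜ[ℝ] (1 : A4) + e15 .H ⊗ₜ[ℝ] MvPolynomial.X 2
    | .X2Xi => e15 .X2Xi ⊗ₜ[ℝ] (1 : A4) + e15 .Xi ⊗ₜ[ℝ] MvPolynomial.X 3
    | .X2H => e15 .X2H ⊗ₜ[ℝ] (1 : A4) + e15 .H ⊗ₜ[ℝ] MvPolynomial.X 3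

lemma e8_eq (b : B8) : e8 b = (Pi.basisFun ℝ B8) b := by
  ext j; simp [e8, Pi.basisFun_apply, Pi.single_apply]

lemma e15_eq (b : B15) : e15 b = (Pi.basisFun ℝ B15) b := by
  ext j; simp [e15, Pi.basisFun_apply, Pi.single_apply]

lemma tauH_apply (b : B8) : tauH (e8 b) =
    (match b with
    | .Xi => e15 .Xi + e15 .H
    | .IXiXi => e15 .IXiXi + e15 .IXiH + e15 .IHXi + e15 .IHH
    | .X1Xi => e15 .X1Xi + e15 .X1H
    | .X2Xi => e15 .X2Xi + e15 .X2H
    | .One => e15 .One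
    | .IXi => e15 .IXi + e15 .IH
    | .X1 => e15 .X1
    | .X2 => e15 .X2) := by
  rw [e8_eq, tauH, Module.Basis.constr_basis]

lemma Delta_apply (b : B8) : Delta (e8 b) =
    (match b with
    | .Xi => e8 .Xi ⊗ₜ[ℝ] (1 : A0)
    | .One => e8 .One ⊗ₜ[ℝ] (1 : A0)
    | .X1 => e8 .X1 ⊗ₜ[ℝ] (1 : A0) + e8 .One ⊗ₜ[ℝ] MvPolynomial.X 1
    | .X2 => e8 .X2 ⊗ₜ[ℝ] (1 : A0) + e8 .One ⊗ₜ[ℝ] MvPolynomial.X 2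
    | .IXi => e8 .IXi ⊗ₜ[ℝ] (1 : A0) + e8 .One ⊗ₜ[ℝ] MvPolynomial.X 0
    | .IXiXi => e8 .IXiXi ⊗ₜ[ℝ] (1 : A0) + e8 .Xi ⊗ₜ[ℝ] MvPolynomial.X 0
    | .X1Xi => e8 .X1Xi ⊗ₜ[ℝ] (1 : A0) + e8 .Xi ⊗ₜ[ℝ] MvPolynomial.X 1
    | .X2Xi => e8 .X2Xi ⊗ₜ[ℝ] (1 : A0) + e8 .Xi ⊗ₜ[ℝ] MvPolynomial.X 2) := by
  rw [e8_eq, Delta, Module.Basis.constr_basis]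

lemma DeltaH_apply (b : B15) : DeltaH (e15 b) =
    (match b with
    | .Xi => e15 .Xi ⊗ₜ[ℝ] (1 : A4)
    | .H => e15 .H ⊗ₜ[ℝ] (1 : A4)
    | .One => e15 .One ⊗ₜ[ℝ] (1 : A4)
    | .X1 => e15 .X1 ⊗ₜ[ℝ] (1 : A4) + e15 .One ⊗ₜ[ℝ] MvPolynomial.X 2
    | .X2 => e15 .X2 ⊗ₜ[ℝ] (1 : A4) + e15 .One ⊗ₜ[ℝ] MvPolynomial.X 3
    | .IXi => e15 .IXi ⊗ₜ[ℝ] (1 : A4) + e15 .One ⊗ₜ[ℝ] MvPolynomial.X 0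
    | .IH => e15 .IH ⊗ₜ[ℝ] (1 : A4) + e15 .One ⊗ₜ[ℝ] MvPolynomial.X 1
    | .IXiXi => e15 .IXiXi ⊗ₜ[ℝ] (1 : A4) + e15 .Xi ⊗ₜ[ℝ] MvPolynomial.X 0
    | .IXiH => e15 .IXiH ⊗ₜ[ℝ] (1 : A4) + e15 .H ⊗ₜ[ℝ] MvPolynomial.X 0
    | .IHXi => e15 .IHXi ⊗ₜ[ℝ] (1 : A4) + e15 .Xi ⊗ₜ[ℝ] MvPolynomial.X 1
    | .IHH => e15 .IHH ⊗ₜ[ℝ] (1 : A4) + e15 .H ⊗ₜ[ℝ] MvPolynomial.X 1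
    | .X1Xi => e15 .X1Xi ⊗ₜ[ℝ] (1 : A4) + e15 .Xi ⊗ₜ[ℝ] MvPolynomial.X 2
    | .X1H => e15 .X1H ⊗ₜ[ℝ] (1 : A4) + e15 .H ⊗ₜ[ℝ] MvPolynomial.X 2
    | .X2Xi => e15 .X2Xi ⊗ₜ[ℝ] (1 : A4) + e15 .Xi ⊗ₜ[ℝ] MvPolynomial.X 3
    | .X2H => e15 .X2H ⊗ₜ[ℝ] (1 : A4) + e15 .H ⊗ₜ[ℝ] MvPolynomial.X 3) := by
  rw [e15_eq, DeltaH, Module.Basis.constr_basis]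

lemma tp0 : tauHplus (MvPolynomial.X 0) = MvPolynomial.X 0 + MvPolynomial.X 1 := by
  simp [tauHplus]

lemma tp1 : tauHplus (MvPolynomial.X 1) = MvPolynomial.X 2 := by simp [tauHplus]

lemma tp2 : tauHplus (MvPolynomial.X 2) = MvPolynomial.X 3 := by simp [tauHplus]

/-- the intertwining identity
`(τ_H ⊗ τ_H⁺) ∘ Δ = Δ^H ∘ τ_H` as linear maps `T_g → T_g^H ⊗ A`. -/
theorem stmt_9 :
    (TensorProduct.map tauH tauHplus.toLinearMap) ∘ₗ Delta = DeltaH ∘ₗ tauH := by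
  apply (Pi.basisFun ℝ B8).ext
  intro b
  rw [LinearMap.comp_apply, LinearMap.comp_apply, ← e8_eq]
  cases b <;>
  · rw [Delta_apply, tauH_apply]
    simp only [map_add, TensorProduct.map_tmul, AlgHom.toLinearMap_apply,
      map_one, tp0, tp1, tp2, tauH_apply, DeltaH_apply,
      TensorProduct.tmul_add, TensorProduct.add_tmul]
    try abel
end

section
/- Let c₀ be the Banach space of real sequences (u_n)_{n∈ℕ} converging to 0, equipped with the supremum norm, and let F : c₀ → ℝ be the supremum functional F(u) = sup_{n∈ℕ} u_n. Let u ∈ c₀ be such that F(u) > 0 and there is exactly one index n₀ with u_{n₀} = F(u). Then F is Fréchet differentiable at u, and its derivative is the continuous linear functional h ↦ h_{n₀}. -/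
lemma c0_abs_apply_le_norm (v : ZeroAtInftyContinuousMap ℕ ℝ) (n : ℕ) : |v n| ≤ ‖v‖ := by
  have := v.toBCF.norm_coe_le_norm n
  rwa [ZeroAtInftyContinuousMap.norm_toBCF_eq_norm] at this

lemma c0_bddAbove (v : ZeroAtInftyContinuousMap ℕ ℝ) : BddAbove (Set.range fun n => v n) := by
  refine ⟨‖v‖, ?_⟩
  rintro x ⟨n, rfl⟩
  exact le_trans (le_abs_self _) (c0_abs_apply_le_norm v n)

/-- the supremum functional on `c₀` (real sequences tending to
zero, with the sup norm) is Fréchet differentiable at every point whose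
supremum is positive and attained at exactly one index, with derivative the
evaluation at that index. -/
theorem stmt_11 (u : ZeroAtInftyContinuousMap ℕ ℝ) (n₀ : ℕ)
    (hpos : 0 < ⨆ n, u n)
    (hmax : u n₀ = ⨆ n, u n)
    (huniq : ∀ m, u m = (⨆ n, u n) → m = n₀) :
    ∃ L : ZeroAtInftyContinuousMap ℕ ℝ →L[ℝ] ℝ,
      (∀ h : ZeroAtInftyContinuousMap ℕ ℝ, L h = h n₀) ∧
      HasFDerivAt (fun v : ZeroAtInftyContinuousMap ℕ ℝ => ⨆ n, v n) L u := by
  set M : ℝ := ⨆ n, u n with hM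
  -- the evaluation functional
  let L : ZeroAtInftyContinuousMap ℕ ℝ →L[ℝ] ℝ :=
    LinearMap.mkContinuous
      { toFun := fun v => v n₀
        map_add' := fun v w => rfl
        map_smul' := fun c v => rfl } 1
      (fun v => by
        simpa [Real.norm_eq_abs] using c0_abs_apply_le_norm v n₀)
  refine ⟨L, fun h => rfl, ?_⟩
  have hle : ∀ n, u n ≤ M := fun n => le_ciSup (c0_bddAbove u) n
  have hzero : Filter.Tendsto (fun n => u n) Filter.atTop (nhds 0) := by
    have := u.zero_at_infty'
    rwa [cocompact_eq_atTop (α := ℕ)] at this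
  obtain ⟨N, hN⟩ := (Metric.tendsto_atTop.mp hzero) (M / 2) (by linarith)
  have hne : (Finset.range (N + 1)).Nonempty := Finset.nonempty_range_iff.mpr (Nat.succ_ne_zero N)
  set c : ℝ := max (M / 2)
      ((Finset.range (N + 1)).sup' hne (fun n => if n = n₀ then M / 2 else u n)) with hc
  have hcM : c < M := by
    rw [hc, max_lt_iff]
    refine ⟨by linarith, (Finset.sup'_lt_iff hne).mpr fun n _ => ?_⟩
    by_cases hn : n = n₀
    · simp [hn]; linarith
    · simp only [hn, if_false]
      exact lt_of_le_of_ne (hle n) (fun h => hn (huniq n h))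
  have hbound : ∀ n, n ≠ n₀ → u n ≤ c := by
    intro n hn
    rcases le_or_gt n N with h | h
    · refine le_trans ?_ (le_max_right _ _)
      have hmem : n ∈ Finset.range (N + 1) := Finset.mem_range.mpr (Nat.lt_succ_of_le h)
      have := Finset.le_sup' (fun n => if n = n₀ then M / 2 else u n) hmem
      simp only [hn, if_false] at this
      exact this
    · have := hN n (by omega)
      rw [Real.dist_eq, sub_zero] at this
      exact le_trans (le_trans (le_abs_self _) this.le) (le_max_left _ _)
  set δ : ℝ := (M - c) / 2 with hδ
  have hδpos : 0 < δ := by rw [hδ]; linarith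
  -- on the ball of radius δ around u, the sup functional equals evaluation at n₀
  have hEq : (fun v : ZeroAtInftyContinuousMap ℕ ℝ => ⨆ n, v n) =ᶠ[nhds u] fun v => L v := by
    filter_upwards [Metric.ball_mem_nhds u hδpos] with v hv
    have hdist : ∀ n, |v n - u n| ≤ dist v u := by
      intro n
      have := c0_abs_apply_le_norm (v - u) n
      rwa [dist_eq_norm]
    have key : ∀ n, v n ≤ v n₀ := by
      intro n
      by_cases hn : n = n₀
      · simp [hn]
      · have h1 : v n ≤ u n + δ := by
          have := (abs_le.mp (hdist n)).2
          have hvu : dist v u < δ := Metric.mem_ball.mp hv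
          linarith
        have h2 : u n₀ - δ ≤ v n₀ := by
          have := (abs_le.mp (hdist n₀)).1
          have hvu : dist v u < δ := Metric.mem_ball.mp hv
          linarith
        have := hbound n hn
        rw [hδ] at h1 h2
        linarith [hmax]
    have : (⨆ n, v n) = v n₀ :=
      le_antisymm (ciSup_le key) (le_ciSup (c0_bddAbove v) n₀)
    exact this
  exact L.hasFDerivAt.congr_of_eventuallyEq hEq
end

section
/- Let g : ℝ → ℝ be twice continuously differentiable, C ∈ ℝ, T > 0, let ξ, h₁, h₂ : ℝ² → ℝ be continuous and periodic, let u : [0,T]×ℝ² → ℝ be continuous and periodic in its space variable, and let a₁, a₂ ∈ ℝ. For a continuous periodic h : ℝ² → ℝ, consider the renormalized tangent equation ∂_t v = Δv + g(u)h + v·( g'(u)ξ − C( (g'(u))² + g''(u)g(u) ) ) with initial condition v(0,·) = 0. If v₁, v₂ and v₃ are classical solutions on [0,T]×ℝ², periodic in their space variable, of this equation with h = h₁, h = h₂ and h = a₁h₁ + a₂h₂ respectively, then v₃ = a₁v₁ + a₂v₂ on [0,T]×ℝ². -/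
open Set Filter

/-- `v` is a classical, spatially periodic solution on `[0,T] × ℝ²` of the
renormalized tangent equation
`∂ₜ v = Δv + g(u) h + v (g'(u) ξ - C ((g'(u))² + g''(u) g(u)))`
with initial condition `v(0,·) = 0`. -/
def IsTangentSolution (g : ℝ → ℝ) (C T : ℝ) (ξ : ℝ → ℝ → ℝ) (u : ℝ → ℝ → ℝ → ℝ)
    (h : ℝ → ℝ → ℝ) (v : ℝ → ℝ → ℝ → ℝ) : Prop :=
  (∀ t, SpacePeriodic (v t)) ∧
  ContinuousOn (fun p : ℝ × ℝ × ℝ => v p.1 p.2.1 p.2.2) (Icc 0 T ×ˢ univ) ∧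
  (∀ t ∈ Ioc 0 T, ContDiff ℝ 2 (fun p : ℝ × ℝ => v t p.1 p.2)) ∧
  (∀ x y : ℝ, ∀ t ∈ Ioc 0 T, DifferentiableAt ℝ (fun s => v s x y) t) ∧
  (∀ x y : ℝ, ContinuousOn (fun s => deriv (fun s' => v s' x y) s) (Ioc 0 T)) ∧
  (∀ t ∈ Ioc 0 T, ∀ x y : ℝ,
    deriv (fun s => v s x y) t =
      (deriv (fun a => deriv (fun b => v t b y) a) x
        + deriv (fun b => deriv (fun a => v t x a) b) y)
      + g (u t x y) * h x y
      + v t x y * (deriv g (u t x y) * ξ x y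
          - C * ((deriv g (u t x y)) ^ 2 + deriv (deriv g) (u t x y) * g (u t x y)))) ∧
  (∀ x y : ℝ, v 0 x y = 0)


/-- Second derivative test: at a global max of a C² function, f'' ≤ 0. -/
lemma second_deriv_nonpos_of_max {f : ℝ → ℝ} (hf : ContDiff ℝ 2 f) {x₀ : ℝ}
    (hmax : ∀ x, f x ≤ f x₀) : deriv (deriv f) x₀ ≤ 0 := by
  by_contra hc
  push_neg at hc
  have hf2 : ContDiff ℝ (1 + 1) f := by norm_num at hf ⊢; exact hf
  have hfd : ContDiff ℝ 1 (deriv f) := (contDiff_succ_iff_deriv.mp hf2).2.2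
  have hd1 : Differentiable ℝ f := (contDiff_succ_iff_deriv.mp hf2).1
  have hdd : Differentiable ℝ (deriv f) := hfd.differentiable one_ne_zero
  -- f'(x₀) = 0
  have h0 : deriv f x₀ = 0 := by
    have : IsLocalMax f x₀ := (isMaxOn_univ_iff.mpr hmax).isLocalMax (univ_mem)
    exact this.deriv_eq_zero
  -- f' positive on a right interval
  have hda : HasDerivAt (deriv f) (deriv (deriv f) x₀) x₀ := (hdd x₀).hasDerivAt
  have hslope : Tendsto (slope (deriv f) x₀) (nhdsWithin x₀ (Ioi x₀)) (nhds (deriv (deriv f) x₀)) := by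
    have := hasDerivWithinAt_iff_tendsto_slope.mp (hda.hasDerivWithinAt (s := Ioi x₀))
    simpa [diff_singleton_eq_self (notMem_Ioi.mpr le_rfl)] using this
  have hev : ∀ᶠ x in nhdsWithin x₀ (Ioi x₀), 0 < slope (deriv f) x₀ x :=
    hslope.eventually (eventually_gt_nhds hc)
  obtain ⟨δ, hδ, hsub⟩ := mem_nhdsGT_iff_exists_Ioo_subset.mp hev
  have hpos : ∀ x ∈ Ioo x₀ δ, 0 < deriv f x := by
    intro x hx
    have h1 : 0 < slope (deriv f) x₀ x := hsub hx
    have h2 : 0 < x - x₀ := sub_pos.mpr hx.1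
    have : slope (deriv f) x₀ x = (deriv f x - 0) / (x - x₀) := by
      rw [slope_def_field, div_eq_div_iff (by linarith) (by linarith)] <;> rw [h0] <;> ring
    rw [this, sub_zero] at h1
    exact (div_pos_iff.mp h1).resolve_right (fun ⟨_, h⟩ => absurd h2 (by linarith)) |>.1
  -- f strictly increasing on [x₀, δ]
  have hmono : StrictMonoOn f (Icc x₀ δ) := by
    apply strictMonoOn_of_deriv_pos (convex_Icc _ _) (hd1.continuous.continuousOn)
    intro x hx
    rw [interior_Icc] at hx
    exact hpos x hx
  have := hmono (left_mem_Icc.mpr hδ.le) (right_mem_Icc.mpr hδ.le) hδ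
  exact absurd (hmax δ) (by linarith)


/-- If `f` is differentiable at `t₀ ∈ (0,T]` and has max on `[0,T]` at `t₀`, deriv ≥ 0. -/
lemma deriv_nonneg_of_max_left_s12 {f : ℝ → ℝ} {T t₀ : ℝ} (ht₀ : t₀ ∈ Ioc 0 T)
    (hd : DifferentiableAt ℝ f t₀) (hmax : ∀ s ∈ Icc 0 T, f s ≤ f t₀) :
    0 ≤ deriv f t₀ := by
  have hda : HasDerivAt f (deriv f t₀) t₀ := hd.hasDerivAt
  have hslope : Tendsto (slope f t₀) (nhdsWithin t₀ (Iio t₀)) (nhds (deriv f t₀)) := by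
    have := hasDerivWithinAt_iff_tendsto_slope.mp (hda.hasDerivWithinAt (s := Iio t₀))
    simpa [diff_singleton_eq_self (notMem_Iio.mpr le_rfl)] using this
  refine le_of_tendsto_of_tendsto tendsto_const_nhds hslope ?_
  have hmem : Ioo 0 t₀ ∈ nhdsWithin t₀ (Iio t₀) :=
    mem_nhdsLT_iff_exists_Ioo_subset.mpr ⟨0, ht₀.1, subset_rfl⟩
  filter_upwards [hmem] with s hs
  have h1 : f s ≤ f t₀ := hmax s ⟨hs.1.le, hs.2.le.trans ht₀.2⟩
  have h2 : s - t₀ < 0 := sub_neg.mpr hs.2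
  have : slope f t₀ s = (f s - f t₀) / (s - t₀) := slope_def_field f t₀ s
  rw [this]
  exact div_nonneg_of_nonpos (by linarith) h2.le

lemma deriv_contDiff_one {f : ℝ → ℝ} (hf : ContDiff ℝ 2 f) : ContDiff ℝ 1 (deriv f) := by
  have hf2 : ContDiff ℝ (1 + 1) f := by norm_num at hf ⊢; exact hf
  exact (contDiff_succ_iff_deriv.mp hf2).2.2

lemma contDiff_slice₁ {F : ℝ × ℝ → ℝ} (h : ContDiff ℝ 2 F) (y : ℝ) :
    ContDiff ℝ 2 (fun b => F (b, y)) :=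
  h.comp (ContDiff.prodMk (contDiff_id : ContDiff ℝ 2 (fun b : ℝ => b)) contDiff_const)

lemma contDiff_slice₂ {F : ℝ × ℝ → ℝ} (h : ContDiff ℝ 2 F) (x : ℝ) :
    ContDiff ℝ 2 (fun a => F (x, a)) :=
  h.comp (ContDiff.prodMk (contDiff_const (c := x)) (contDiff_id : ContDiff ℝ 2 (fun a : ℝ => a)))

lemma max_principle {T : ℝ} (hT : 0 < T) (V w : ℝ → ℝ → ℝ → ℝ) (M : ℝ)
    (hVM : ∀ t ∈ Icc 0 T, ∀ x ∈ Icc 0 (2*Real.pi), ∀ y ∈ Icc 0 (2*Real.pi), V t x y ≤ M)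
    (hwp : ∀ t, SpacePeriodic (w t))
    (hwc : ContinuousOn (fun p : ℝ×ℝ×ℝ => w p.1 p.2.1 p.2.2) (Icc 0 T ×ˢ (univ : Set (ℝ×ℝ))))
    (hws : ∀ t ∈ Ioc 0 T, ContDiff ℝ 2 (fun p : ℝ×ℝ => w t p.1 p.2))
    (hwt : ∀ x y : ℝ, ∀ t ∈ Ioc 0 T, DifferentiableAt ℝ (fun s => w s x y) t)
    (hpde : ∀ t ∈ Ioc 0 T, ∀ x y : ℝ, deriv (fun s => w s x y) t =
        (deriv (fun a => deriv (fun b => w t b y) a) x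
          + deriv (fun b => deriv (fun a => w t x a) b) y) + w t x y * V t x y)
    (hw0 : ∀ x y : ℝ, w 0 x y = 0) :
    ∀ t ∈ Icc 0 T, ∀ x y : ℝ, w t x y ≤ 0 := by
  set L : ℝ := |M| + 1 with hL
  set Z : ℝ × ℝ × ℝ → ℝ := fun p => Real.exp (-L * p.1) * w p.1 p.2.1 p.2.2 with hZ
  set Q : Set (ℝ × ℝ × ℝ) := Icc 0 T ×ˢ (Icc 0 (2*Real.pi) ×ˢ Icc 0 (2*Real.pi)) with hQ
  have hπ : (0:ℝ) < 2 * Real.pi := by positivity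
  have hQc : IsCompact Q := (isCompact_Icc).prod ((isCompact_Icc).prod isCompact_Icc)
  have hQne : Q.Nonempty :=
    ⟨(0, 0, 0), ⟨⟨le_rfl, hT.le⟩, ⟨le_rfl, hπ.le⟩, ⟨le_rfl, hπ.le⟩⟩⟩
  have hQsub : Q ⊆ Icc 0 T ×ˢ (univ : Set (ℝ×ℝ)) := by
    intro p hp; exact ⟨hp.1, trivial⟩
  have hZc : ContinuousOn Z Q := by
    apply ContinuousOn.mul
    · exact (Real.continuous_exp.comp (continuous_const.mul continuous_fst)).continuousOn
    · exact hwc.mono hQsub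
  obtain ⟨p₀, hp₀Q, hp₀max⟩ := hQc.exists_isMaxOn hQne hZc
  obtain ⟨t₀, x₀, y₀⟩ := p₀
  have ht₀m : t₀ ∈ Icc 0 T := hp₀Q.1
  -- global maximality via periodicity
  have key : ∀ t ∈ Icc 0 T, ∀ x y : ℝ, Z (t, x, y) ≤ Z (t₀, x₀, y₀) := by
    intro t ht x y
    set x' : ℝ := x - ⌊x / (2*Real.pi)⌋ * (2*Real.pi) with hx'
    set y' : ℝ := y - ⌊y / (2*Real.pi)⌋ * (2*Real.pi) with hy'
    have hx'm : x' ∈ Icc 0 (2*Real.pi) :=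
      ⟨Int.sub_floor_div_mul_nonneg x hπ, (Int.sub_floor_div_mul_lt x hπ).le⟩
    have hy'm : y' ∈ Icc 0 (2*Real.pi) :=
      ⟨Int.sub_floor_div_mul_nonneg y hπ, (Int.sub_floor_div_mul_lt y hπ).le⟩
    have hper : w t x y = w t x' y' := by
      have := hwp t ⌊x / (2*Real.pi)⌋ ⌊y / (2*Real.pi)⌋ x' y'
      rw [show x' + 2 * Real.pi * (⌊x / (2*Real.pi)⌋ : ℝ) = x by rw [hx']; ring,
        show y' + 2 * Real.pi * (⌊y / (2*Real.pi)⌋ : ℝ) = y by rw [hy']; ring] at this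
      exact this
    have : Z (t, x, y) = Z (t, x', y') := by simp only [hZ, hper]
    rw [this]
    exact hp₀max ⟨ht, hx'm, hy'm⟩
  have hEpos : ∀ s : ℝ, (0:ℝ) < Real.exp (-L * s) := fun s => Real.exp_pos _
  -- case on the sign of the max
  rcases le_or_gt (Z (t₀, x₀, y₀)) 0 with hle | hpos
  · intro t ht x y
    have := (key t ht x y).trans hle
    simp only [hZ] at this
    nlinarith [hEpos t]
  · exfalso
    have ht₀0 : t₀ ≠ 0 := by
      intro h
      rw [hZ] at hpos
      simp only [h, hw0 x₀ y₀, mul_zero] at hpos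
      exact lt_irrefl 0 hpos
    have ht₀ : t₀ ∈ Ioc 0 T := ⟨lt_of_le_of_ne ht₀m.1 (Ne.symm ht₀0), ht₀m.2⟩
    have hwpos : 0 < w t₀ x₀ y₀ := by
      by_contra h
      push_neg at h
      have : Z (t₀, x₀, y₀) ≤ 0 := mul_nonpos_of_nonneg_of_nonpos (hEpos t₀).le h
      linarith
    -- time derivative
    set f : ℝ → ℝ := fun s => Real.exp (-L * s) * w s x₀ y₀ with hf
    have hwd : DifferentiableAt ℝ (fun s => w s x₀ y₀) t₀ := hwt x₀ y₀ t₀ ht₀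
    have hexp : HasDerivAt (fun s : ℝ => Real.exp (-L * s)) (Real.exp (-L * t₀) * (-L)) t₀ := by
      simpa using ((hasDerivAt_id t₀).const_mul (-L)).exp
    have hfd : HasDerivAt f (Real.exp (-L * t₀) * (-L) * w t₀ x₀ y₀
        + Real.exp (-L * t₀) * deriv (fun s => w s x₀ y₀) t₀) t₀ :=
      hexp.mul hwd.hasDerivAt
    have hder : 0 ≤ deriv f t₀ := by
      apply deriv_nonneg_of_max_left_s12 ht₀ hfd.differentiableAt
      intro s hs
      exact key s hs x₀ y₀
    rw [hfd.deriv] at hder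
    have hDlow : L * w t₀ x₀ y₀ ≤ deriv (fun s => w s x₀ y₀) t₀ := by
      nlinarith [hEpos t₀]
    -- space: second derivative tests
    have hsmax : ∀ x y : ℝ, w t₀ x y ≤ w t₀ x₀ y₀ := by
      intro x y
      have := key t₀ ht₀m x y
      simp only [hZ] at this
      nlinarith [hEpos t₀]
    have hφ : ContDiff ℝ 2 (fun b => w t₀ b y₀) := contDiff_slice₁ (hws t₀ ht₀) y₀
    have hψ : ContDiff ℝ 2 (fun a => w t₀ x₀ a) := contDiff_slice₂ (hws t₀ ht₀) x₀
    have hφ'' : deriv (deriv (fun b => w t₀ b y₀)) x₀ ≤ 0 :=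
      second_deriv_nonpos_of_max hφ (fun x => hsmax x y₀)
    have hψ'' : deriv (deriv (fun a => w t₀ x₀ a)) y₀ ≤ 0 :=
      second_deriv_nonpos_of_max hψ (fun y => hsmax x₀ y)
    have hpde' := hpde t₀ ht₀ x₀ y₀
    have hVle : V t₀ x₀ y₀ ≤ M := hVM t₀ ht₀m x₀ hp₀Q.2.1 y₀ hp₀Q.2.2
    have hML : M < L := by rw [hL]; cases abs_cases M <;> linarith
    nlinarith [hpde', hDlow, mul_lt_mul_of_pos_left hML hwpos,
      mul_le_mul_of_nonneg_left hVle hwpos.le]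

/-- the solution of the renormalized tangent equation depends
linearly on the inhomogeneity `h`. -/
theorem stmt_12
    (g : ℝ → ℝ) (hg : ContDiff ℝ 2 g)
    (C T : ℝ) (hT : 0 < T)
    (ξ h₁ h₂ : ℝ → ℝ → ℝ)
    (hξc : Continuous fun p : ℝ × ℝ => ξ p.1 p.2) (hξp : SpacePeriodic ξ)
    (hh₁c : Continuous fun p : ℝ × ℝ => h₁ p.1 p.2) (hh₁p : SpacePeriodic h₁)
    (hh₂c : Continuous fun p : ℝ × ℝ => h₂ p.1 p.2) (hh₂p : SpacePeriodic h₂)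
    (u : ℝ → ℝ → ℝ → ℝ)
    (hup : ∀ t, SpacePeriodic (u t))
    (huc : ContinuousOn (fun p : ℝ × ℝ × ℝ => u p.1 p.2.1 p.2.2) (Icc 0 T ×ˢ univ))
    (a₁ a₂ : ℝ)
    (v₁ v₂ v₃ : ℝ → ℝ → ℝ → ℝ)
    (hv₁ : IsTangentSolution g C T ξ u h₁ v₁)
    (hv₂ : IsTangentSolution g C T ξ u h₂ v₂)
    (hv₃ : IsTangentSolution g C T ξ u
      (fun x y => a₁ * h₁ x y + a₂ * h₂ x y) v₃) :
    ∀ t ∈ Icc 0 T, ∀ x y : ℝ, v₃ t x y = a₁ * v₁ t x y + a₂ * v₂ t x y := by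
  obtain ⟨h1p, h1c, h1s, h1t, -, h1pde, h1z⟩ := hv₁
  obtain ⟨h2p, h2c, h2s, h2t, -, h2pde, h2z⟩ := hv₂
  obtain ⟨h3p, h3c, h3s, h3t, -, h3pde, h3z⟩ := hv₃
  set V : ℝ → ℝ → ℝ → ℝ := fun t x y => deriv g (u t x y) * ξ x y
      - C * ((deriv g (u t x y)) ^ 2 + deriv (deriv g) (u t x y) * g (u t x y)) with hV
  set w : ℝ → ℝ → ℝ → ℝ := fun t x y => v₃ t x y - (a₁ * v₁ t x y + a₂ * v₂ t x y) with hw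
  have hπ : (0:ℝ) < 2 * Real.pi := by positivity
  -- bound on V on the fundamental cylinder
  have hQc : IsCompact ((Icc (0:ℝ) T) ×ˢ (Icc (0:ℝ) (2*Real.pi) ×ˢ Icc (0:ℝ) (2*Real.pi))) :=
    isCompact_Icc.prod (isCompact_Icc.prod isCompact_Icc)
  have hQsub : ((Icc (0:ℝ) T) ×ˢ (Icc (0:ℝ) (2*Real.pi) ×ˢ Icc (0:ℝ) (2*Real.pi)))
      ⊆ Icc 0 T ×ˢ (univ : Set (ℝ×ℝ)) := fun p hp => ⟨hp.1, trivial⟩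
  have hVcont : ContinuousOn (fun p : ℝ×ℝ×ℝ => V p.1 p.2.1 p.2.2)
      (Icc 0 T ×ˢ (univ : Set (ℝ×ℝ))) := by
    have hgc : Continuous g := hg.continuous
    have hg' : Continuous (deriv g) := hg.continuous_deriv (by norm_num)
    have hg'' : Continuous (deriv (deriv g)) := (deriv_contDiff_one hg).continuous_deriv le_rfl
    have hξ' : Continuous (fun p : ℝ×ℝ×ℝ => ξ p.2.1 p.2.2) :=
      hξc.comp continuous_snd
    exact ((hg'.comp_continuousOn huc).mul hξ'.continuousOn).sub
      (continuousOn_const.mul (((hg'.comp_continuousOn huc).pow 2).add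
        ((hg''.comp_continuousOn huc).mul (hgc.comp_continuousOn huc))))
  obtain ⟨M, hM⟩ := hQc.exists_bound_of_continuousOn (hVcont.mono hQsub)
  have hVM : ∀ t ∈ Icc (0:ℝ) T, ∀ x ∈ Icc (0:ℝ) (2*Real.pi), ∀ y ∈ Icc (0:ℝ) (2*Real.pi),
      V t x y ≤ M := by
    intro t ht x hx y hy
    have := hM (t, x, y) ⟨ht, hx, hy⟩
    rw [Real.norm_eq_abs] at this
    exact (abs_le.mp this).2
  -- the six hypotheses for w
  have hwp : ∀ t, SpacePeriodic (w t) := by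
    intro t k₁ k₂ x y
    simp only [hw, h1p t k₁ k₂ x y, h2p t k₁ k₂ x y, h3p t k₁ k₂ x y]
  have hwc : ContinuousOn (fun p : ℝ×ℝ×ℝ => w p.1 p.2.1 p.2.2) (Icc 0 T ×ˢ (univ : Set (ℝ×ℝ))) :=
    h3c.sub ((continuousOn_const.mul h1c).add (continuousOn_const.mul h2c))
  have hws : ∀ t ∈ Ioc (0:ℝ) T, ContDiff ℝ 2 (fun p : ℝ×ℝ => w t p.1 p.2) := by
    intro t ht
    exact (h3s t ht).sub ((contDiff_const.mul (h1s t ht)).add (contDiff_const.mul (h2s t ht)))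
  have hwt : ∀ x y : ℝ, ∀ t ∈ Ioc (0:ℝ) T, DifferentiableAt ℝ (fun s => w s x y) t := by
    intro x y t ht
    exact (h3t x y t ht).sub (((h1t x y t ht).const_mul a₁).add ((h2t x y t ht).const_mul a₂))
  have hw0 : ∀ x y : ℝ, w 0 x y = 0 := by
    intro x y
    simp [hw, h1z x y, h2z x y, h3z x y]
  have hwpde : ∀ t ∈ Ioc (0:ℝ) T, ∀ x y : ℝ, deriv (fun s => w s x y) t =
      (deriv (fun a => deriv (fun b => w t b y) a) x
        + deriv (fun b => deriv (fun a => w t x a) b) y) + w t x y * V t x y := by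
    intro t ht x y
    have Φ₁ : ContDiff ℝ 2 (fun b => v₁ t b y) := contDiff_slice₁ (h1s t ht) y
    have Φ₂ : ContDiff ℝ 2 (fun b => v₂ t b y) := contDiff_slice₁ (h2s t ht) y
    have Φ₃ : ContDiff ℝ 2 (fun b => v₃ t b y) := contDiff_slice₁ (h3s t ht) y
    have Ψ₁ : ContDiff ℝ 2 (fun a => v₁ t x a) := contDiff_slice₂ (h1s t ht) x
    have Ψ₂ : ContDiff ℝ 2 (fun a => v₂ t x a) := contDiff_slice₂ (h2s t ht) x
    have Ψ₃ : ContDiff ℝ 2 (fun a => v₃ t x a) := contDiff_slice₂ (h3s t ht) x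
    have hxin : deriv (fun b => w t b y) = fun b => deriv (fun b' => v₃ t b' y) b
        - (a₁ * deriv (fun b' => v₁ t b' y) b + a₂ * deriv (fun b' => v₂ t b' y) b) := by
      funext b
      have d3 := (Φ₃.differentiable (by norm_num) b).hasDerivAt
      have d1 := (Φ₁.differentiable (by norm_num) b).hasDerivAt
      have d2 := (Φ₂.differentiable (by norm_num) b).hasDerivAt
      exact (d3.sub ((d1.const_mul a₁).add (d2.const_mul a₂))).deriv
    have hyin : deriv (fun a => w t x a) = fun a => deriv (fun a' => v₃ t x a') a
        - (a₁ * deriv (fun a' => v₁ t x a') a + a₂ * deriv (fun a' => v₂ t x a') a) := by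
      funext a
      have d3 := (Ψ₃.differentiable (by norm_num) a).hasDerivAt
      have d1 := (Ψ₁.differentiable (by norm_num) a).hasDerivAt
      have d2 := (Ψ₂.differentiable (by norm_num) a).hasDerivAt
      exact (d3.sub ((d1.const_mul a₁).add (d2.const_mul a₂))).deriv
    have hxout : deriv (fun a => deriv (fun b => w t b y) a) x =
        deriv (fun a => deriv (fun b => v₃ t b y) a) x
          - (a₁ * deriv (fun a => deriv (fun b => v₁ t b y) a) x
            + a₂ * deriv (fun a => deriv (fun b => v₂ t b y) a) x) := by
      rw [hxin]
      have D3 := ((deriv_contDiff_one Φ₃).differentiable one_ne_zero x).hasDerivAt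
      have D1 := ((deriv_contDiff_one Φ₁).differentiable one_ne_zero x).hasDerivAt
      have D2 := ((deriv_contDiff_one Φ₂).differentiable one_ne_zero x).hasDerivAt
      exact (D3.sub ((D1.const_mul a₁).add (D2.const_mul a₂))).deriv
    have hyout : deriv (fun b => deriv (fun a => w t x a) b) y =
        deriv (fun b => deriv (fun a => v₃ t x a) b) y
          - (a₁ * deriv (fun b => deriv (fun a => v₁ t x a) b) y
            + a₂ * deriv (fun b => deriv (fun a => v₂ t x a) b) y) := by
      rw [hyin]
      have D3 := ((deriv_contDiff_one Ψ₃).differentiable one_ne_zero y).hasDerivAt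
      have D1 := ((deriv_contDiff_one Ψ₁).differentiable one_ne_zero y).hasDerivAt
      have D2 := ((deriv_contDiff_one Ψ₂).differentiable one_ne_zero y).hasDerivAt
      exact (D3.sub ((D1.const_mul a₁).add (D2.const_mul a₂))).deriv
    have htd : deriv (fun s => w s x y) t = deriv (fun s => v₃ s x y) t
        - (a₁ * deriv (fun s => v₁ s x y) t + a₂ * deriv (fun s => v₂ s x y) t) := by
      have d3 := (h3t x y t ht).hasDerivAt
      have d1 := (h1t x y t ht).hasDerivAt
      have d2 := (h2t x y t ht).hasDerivAt
      exact (d3.sub ((d1.const_mul a₁).add (d2.const_mul a₂))).deriv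
    rw [htd, hxout, hyout, h3pde t ht x y, h1pde t ht x y, h2pde t ht x y]
    simp only [hw, hV]
    ring
  have hwle := max_principle hT V w M hVM hwp hwc hws hwt hwpde hw0
  -- the negated function
  have hnegle := max_principle hT V (fun t x y => -(w t x y)) M hVM
    (fun t k₁ k₂ x y => by simp only [hwp t k₁ k₂ x y])
    (hwc.neg)
    (fun t ht => (hws t ht).neg)
    (fun x y t ht => (hwt x y t ht).neg)
    (by
      intro t ht x y
      show deriv (fun s => -(w s x y)) t =
        (deriv (fun a => deriv (fun b => -(w t b y)) a) x
          + deriv (fun b => deriv (fun a => -(w t x a)) b) y) + (-(w t x y)) * V t x y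
      have E1 : deriv (fun a => deriv (fun b => -(w t b y)) a) x
          = -(deriv (fun a => deriv (fun b => w t b y) a) x) := by
        rw [show (fun a => deriv (fun b => -(w t b y)) a)
            = fun a => -(deriv (fun b => w t b y) a) from funext fun a => deriv.neg]
        exact deriv.neg
      have E2 : deriv (fun b => deriv (fun a => -(w t x a)) b) y
          = -(deriv (fun b => deriv (fun a => w t x a) b) y) := by
        rw [show (fun b => deriv (fun a => -(w t x a)) b)
            = fun b => -(deriv (fun a => w t x a) b) from funext fun b => deriv.neg]
        exact deriv.neg
      have Et : deriv (fun s => -(w s x y)) t = -(deriv (fun s => w s x y) t) := deriv.neg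
      rw [Et, E1, E2, hwpde t ht x y]
      ring)
    (fun x y => by show -(w 0 x y) = 0; rw [hw0 x y]; ring)
  intro t ht x y
  have hA := hwle t ht x y
  have hB := hnegle t ht x y
  simp only [hw] at hA hB
  linarith
end
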